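/- arXiv:1304.5648 — 6 statements merged into one kernel-verified Lean document; each statement's English description precedes it below -/
import Mathlib

section
/- Let G be a finite group and let i : X → Y, j : Y → Z and k : W → Z be maps of finite G-sets. Let P := Y ×_Z W with projections to Y and h : P → W, and let Q := X ×_Y P with projections to X and g : Q → P. Then base change along k of the exponential diagram for (i, j) is an exponential diagram for (g, h): the commutative diagram with bottom row Q →g P →h W, top row the base change of π₂ : Y ×_Z ∏_{i,j} X → ∏_{i,j} X along k, left vertical the base change of e and right vertical the base change of p, is an exponential diagram; in particular there is a canonical G-isomorphism ∏_{g,h} Q ≅ W ×_Z ∏_{i,j} X compatible with the structure maps. -/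
set_option autoImplicit false

namespace Tamb

variable {G : Type} [Group G]

/-- A function between `G`-sets is equivariant. -/
def IsEquivariant (G : Type) [Group G] {A B : Type} [SMul G A] [SMul G B] (f : A → B) : Prop :=
  ∀ (g : G) (a : A), f (g • a) = g • f a

section Maps

variable {X Y Z : Type} [MulAction G X] [MulAction G Y] [MulAction G Z]

/-- The identity equivariant map. -/
def gid (G X : Type) [Group G] [MulAction G X] : X →[G] X :=
  ⟨fun x => x, fun _ _ => rfl⟩

@[simp] theorem gid_apply (x : X) : gid G X x = x := rfl

/-- Composition of equivariant maps. -/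
def gcomp (j : Y →[G] Z) (i : X →[G] Y) : X →[G] Z :=
  ⟨fun x => j (i x), fun g x => by
    show j (i (g • x)) = g • j (i x)
    rw [MulActionHom.map_smul, MulActionHom.map_smul]⟩

@[simp] theorem gcomp_apply (j : Y →[G] Z) (i : X →[G] Y) (x : X) : gcomp j i x = j (i x) := rfl

/-- The pullback of two equivariant maps of `G`-sets. -/
def Pb (f : X →[G] Z) (g : Y →[G] Z) : Type := {p : X × Y // f p.1 = g p.2}

namespace Pb

variable (f : X →[G] Z) (g : Y →[G] Z)

instance : SMul G (Pb f g) :=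
  ⟨fun a p => ⟨(a • p.1.1, a • p.1.2), by
    rw [MulActionHom.map_smul, MulActionHom.map_smul, p.2]⟩⟩

instance : MulAction G (Pb f g) where
  one_smul p := Subtype.ext (Prod.ext (one_smul _ _) (one_smul _ _))
  mul_smul a b p := Subtype.ext (Prod.ext (mul_smul _ _ _) (mul_smul _ _ _))

instance [Finite X] [Finite Y] : Finite (Pb f g) := Subtype.finite

/-- First projection of a pullback. -/
def fstHom : Pb f g →[G] X := ⟨fun p => p.1.1, fun _ _ => rfl⟩
/-- Second projection of a pullback. -/
def sndHom : Pb f g →[G] Y := ⟨fun p => p.1.2, fun _ _ => rfl⟩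

@[simp] theorem fstHom_apply (p : Pb f g) : fstHom f g p = p.1.1 := rfl
@[simp] theorem sndHom_apply (p : Pb f g) : sndHom f g p = p.1.2 := rfl

end Pb

/-- `Sec i j` is the set `∏_{i,j} X` of sections of `i : X → Y` defined on fibers
of `j : Y → Z`: an element is a point `z : Z` together with a section of `i`
defined on `j⁻¹(z)`. -/
structure Sec (i : X →[G] Y) (j : Y →[G] Z) where
  pt : Z
  sec : ∀ y : Y, j y = pt → X
  isSec : ∀ (y : Y) (h : j y = pt), i (sec y h) = y

namespace Sec

variable {i : X →[G] Y} {j : Y →[G] Z}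

theorem ext' {σ τ : Sec i j} (h1 : σ.pt = τ.pt)
    (h2 : ∀ (y : Y) (h : j y = σ.pt) (h' : j y = τ.pt), σ.sec y h = τ.sec y h') : σ = τ := by
  obtain ⟨p, s, hs⟩ := σ
  obtain ⟨p', s', hs'⟩ := τ
  dsimp at h1
  subst h1
  have hss : s = s' := by
    funext y hy
    exact h2 y hy hy
  subst hss
  rfl

theorem sec_congr (σ : Sec i j) {y y' : Y} (e : y = y') {h : j y = σ.pt} {h' : j y' = σ.pt} :
    σ.sec y h = σ.sec y' h' := by subst e; rfl

instance : SMul G (Sec i j) :=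
  ⟨fun a σ =>
    { pt := a • σ.pt
      sec := fun y h => a • σ.sec (a⁻¹ • y) (by rw [MulActionHom.map_smul, h, inv_smul_smul])
      isSec := fun y h => by
        rw [MulActionHom.map_smul, σ.isSec, smul_inv_smul] }⟩

@[simp] theorem smul_pt (a : G) (σ : Sec i j) : (a • σ).pt = a • σ.pt := rfl

theorem smul_sec (a : G) (σ : Sec i j) (y : Y) (h : j y = (a • σ).pt)
    (h' : j (a⁻¹ • y) = σ.pt) : (a • σ).sec y h = a • σ.sec (a⁻¹ • y) h' := rfl

instance : MulAction G (Sec i j) where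
  one_smul σ := by
    refine ext' (one_smul _ _) (fun y h h' => ?_)
    have h'' : j ((1 : G)⁻¹ • y) = σ.pt := by rw [inv_one, one_smul]; exact h'
    rw [smul_sec 1 σ y h h'', one_smul]
    exact sec_congr σ (by rw [inv_one, one_smul])
  mul_smul a b σ := by
    refine ext' (mul_smul _ _ _) (fun y h h' => ?_)
    have h1 : j ((a * b)⁻¹ • y) = σ.pt := by
      rw [MulActionHom.map_smul, h]
      exact inv_smul_smul _ _
    have h2 : j (a⁻¹ • y) = (b • σ).pt := by
      rw [MulActionHom.map_smul, h']
      show a⁻¹ • (a • (b • σ).pt) = _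
      exact inv_smul_smul _ _
    have h3 : j (b⁻¹ • (a⁻¹ • y)) = σ.pt := by
      rw [MulActionHom.map_smul, h2]
      exact inv_smul_smul _ _
    rw [smul_sec (a * b) σ y h h1, smul_sec a (b • σ) y h' h2, smul_sec b σ (a⁻¹ • y) h2 h3,
      mul_smul]
    exact congrArg (a • ·) (congrArg (b • ·) (sec_congr σ (by rw [mul_inv_rev, mul_smul])))

instance optionFinite {X : Type} [Finite X] : Finite (Option X) :=
  Finite.of_equiv (X ⊕ PUnit.{1}) (Equiv.optionEquivSumPUnit.{0,0} X).symm

instance [Finite X] [Finite Y] [Finite Z] : Finite (Sec i j) := by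
  classical
  have hF : Function.Injective (fun σ : Sec i j =>
      ((σ.pt, fun y => if h : j y = σ.pt then some (σ.sec y h) else none) :
        Z × (Y → Option X))) := by
    intro σ τ he
    have h1 : σ.pt = τ.pt := congrArg Prod.fst he
    refine ext' h1 (fun y hy hy' => ?_)
    have h2 := congrFun (congrArg Prod.snd he) y
    dsimp only at h2
    rw [dif_pos hy, dif_pos hy'] at h2
    exact Option.some_injective _ h2
  exact Finite.of_injective _ hF

end Sec

/-- The canonical projection `∏_{i,j} X → Z`. -/
def pHom (i : X →[G] Y) (j : Y →[G] Z) : Sec i j →[G] Z :=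
  ⟨fun σ => σ.pt, fun _ _ => rfl⟩

@[simp] theorem pHom_apply (i : X →[G] Y) (j : Y →[G] Z) (σ : Sec i j) :
    pHom i j σ = σ.pt := rfl

/-- The canonical pullback `Y ×_Z ∏_{i,j} X`. -/
abbrev ECan (i : X →[G] Y) (j : Y →[G] Z) : Type := Pb j (pHom i j)

/-- The evaluation map `e : Y ×_Z ∏_{i,j} X → X`. -/
def eval (i : X →[G] Y) (j : Y →[G] Z) : ECan i j → X := fun q => q.1.2.sec q.1.1 q.2

theorem eval_smul (i : X →[G] Y) (j : Y →[G] Z) (a : G) (q : ECan i j) :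
    eval i j (a • q) = a • eval i j q := by
  have h1 : j (a • q.1.1) = (a • q.1.2).pt := by
    rw [MulActionHom.map_smul, q.2]; rfl
  have h2 : j (a⁻¹ • (a • q.1.1)) = q.1.2.pt := by rw [inv_smul_smul]; exact q.2
  calc eval i j (a • q) = (a • q.1.2).sec (a • q.1.1) h1 := rfl
    _ = a • q.1.2.sec (a⁻¹ • (a • q.1.1)) h2 := Sec.smul_sec _ _ _ _ _
    _ = a • q.1.2.sec q.1.1 q.2 := congrArg (a • ·) (Sec.sec_congr _ (inv_smul_smul a q.1.1))

/-- The evaluation map as an equivariant map. -/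
def evalHom (i : X →[G] Y) (j : Y →[G] Z) : ECan i j →[G] X :=
  ⟨eval i j, eval_smul i j⟩

/-- The projection `π₂ : Y ×_Z ∏_{i,j} X → ∏_{i,j} X` of the canonical exponential diagram. -/
def pi2Hom (i : X →[G] Y) (j : Y →[G] Z) : ECan i j →[G] Sec i j :=
  Pb.sndHom j (pHom i j)

end Maps

/-- `(f, g, h)` is a distributor for `(i, j)`: the diagram with bottom row
`X →i Y →j Z`, top row `g : A → B`, left vertical `f : A → X` and right vertical
`h : B → Z` is an exponential diagram, i.e. it is isomorphic (by equivariant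
bijections fixing the bottom row) to the canonical diagram built from `∏_{i,j} X`. -/
def IsDistributor {X Y Z A B : Type} [MulAction G X] [MulAction G Y] [MulAction G Z]
    [MulAction G A] [MulAction G B]
    (i : X →[G] Y) (j : Y →[G] Z) (f : A →[G] X) (g : A →[G] B) (h : B →[G] Z) : Prop :=
  ∃ (α : A ≃ ECan i j) (β : B ≃ Sec i j),
    IsEquivariant G ⇑α ∧ IsEquivariant G ⇑β ∧
    (∀ a, eval i j (α a) = f a) ∧
    (∀ a, β (g a) = (α a).1.2) ∧
    (∀ b, (β b).pt = h b)

end Tamb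

namespace Tamb

variable {G : Type} [Group G]

section Statement0

variable {X Y Z W : Type} [MulAction G X] [MulAction G Y] [MulAction G Z] [MulAction G W]
  [Finite X] [Finite Y] [Finite Z] [Finite W]

variable (i : X →[G] Y) (j : Y →[G] Z) (k : W →[G] Z)

/-- `P := Y ×_Z W`. -/
abbrev PBC : Type := Pb j k

/-- `h : P → W`. -/
def hBC : PBC j k →[G] W := Pb.sndHom j k

/-- `Q := X ×_Y P`. -/
abbrev QBC : Type := Pb i (Pb.fstHom j k)

/-- `g : Q → P`. -/
def gBC : QBC i j k →[G] PBC j k := Pb.sndHom i (Pb.fstHom j k)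

/-- The base change `(∏_{i,j} X) ×_Z W ≅ W ×_Z ∏_{i,j} X` of `∏_{i,j} X` along `k`. -/
abbrev SBC : Type := Pb (pHom i j) k

/-- The base change of the structure map `p : ∏_{i,j} X → Z` along `k`. -/
def pBC : SBC i j k →[G] W := Pb.sndHom (pHom i j) k

/-- The base change `(Y ×_Z ∏_{i,j} X) ×_Z W` of `Y ×_Z ∏_{i,j} X` along `k`. -/
abbrev EBC : Type := Pb (gcomp (pHom i j) (pi2Hom i j)) k

/-- The base change of the top map `π₂ : Y ×_Z ∏_{i,j} X → ∏_{i,j} X` along `k`. -/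
def tBC : EBC i j k →[G] SBC i j k :=
  ⟨fun q => ⟨(q.1.1.1.2, q.1.2), q.2⟩, fun _ _ => rfl⟩

/-- The base change of the evaluation map `e : Y ×_Z ∏_{i,j} X → X` along `k`,
viewed as a map to `Q = X ×_Y P`. -/
def lBC : EBC i j k →[G] QBC i j k :=
  ⟨fun q => ⟨(eval i j q.1.1, ⟨(q.1.1.1.1, q.1.2), q.1.1.2.trans q.2⟩),
      q.1.1.1.2.isSec q.1.1.1.1 q.1.1.2⟩,
   fun a q => by
    apply Subtype.ext
    apply Prod.ext
    · exact eval_smul i j a q.1.1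
    · apply Subtype.ext
      apply Prod.ext <;> rfl⟩

/-- The map `SBC → Sec gBC hBC`. -/
def toSecBC (s : SBC i j k) : Sec (gBC i j k) (hBC j k) where
  pt := s.1.2
  sec p hp := ⟨(s.1.1.sec p.1.1
      (p.2.trans (by rw [show p.1.2 = s.1.2 from hp]; exact s.2.symm)), p),
    s.1.1.isSec _ _⟩
  isSec _ _ := rfl

/-- The map `Sec gBC hBC → SBC`. -/
def ofSecBC (τ : Sec (gBC i j k) (hBC j k)) : SBC i j k :=
  ⟨({ pt := k τ.pt
      sec := fun y hy => (τ.sec ⟨(y, τ.pt), hy⟩ rfl).1.1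
      isSec := fun y hy => (τ.sec ⟨(y, τ.pt), hy⟩ rfl).2.trans
        (congrArg (fun r : PBC j k => r.1.1) (τ.isSec ⟨(y, τ.pt), hy⟩ rfl)) },
    τ.pt), rfl⟩

theorem ofSec_toSec (s : SBC i j k) : ofSecBC i j k (toSecBC i j k s) = s := by
  apply Subtype.ext; apply Prod.ext
  · exact Sec.ext' s.2.symm (fun y hy hy' => rfl)
  · rfl

theorem toSec_ofSec (τ : Sec (gBC i j k) (hBC j k)) :
    toSecBC i j k (ofSecBC i j k τ) = τ := by
  refine Sec.ext' rfl (fun p hp hp' => ?_)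
  have hj : j p.1.1 = k τ.pt := by rw [← hp']; exact p.2
  have hpe : (⟨(p.1.1, τ.pt), hj⟩ : PBC j k) = p := Subtype.ext (Prod.ext rfl hp'.symm)
  have hc := Sec.sec_congr τ (h := rfl) (h' := hp') hpe
  apply Subtype.ext; apply Prod.ext
  · show (τ.sec ⟨(p.1.1, τ.pt), hj⟩ rfl).1.1 = (τ.sec p hp').1.1
    rw [hc]
  · exact (τ.isSec p hp').symm

theorem toSec_equivariant (a : G) (s : SBC i j k) :
    toSecBC i j k (a • s) = a • toSecBC i j k s := by
  refine Sec.ext' rfl (fun p hp hp' => ?_)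
  have hinv : hBC j k (a⁻¹ • p) = (toSecBC i j k s).pt := by
    show a⁻¹ • p.1.2 = s.1.2
    have h : p.1.2 = a • s.1.2 := hp'
    rw [h, inv_smul_smul]
  rw [Sec.smul_sec a (toSecBC i j k s) p hp' hinv]
  exact Subtype.ext (Prod.ext rfl (smul_inv_smul a p).symm)

theorem ofSec_equivariant (a : G) (τ : Sec (gBC i j k) (hBC j k)) :
    ofSecBC i j k (a • τ) = a • ofSecBC i j k τ := by
  have h := toSec_equivariant i j k a (ofSecBC i j k τ)
  rw [toSec_ofSec] at h
  have h2 : toSecBC i j k (ofSecBC i j k (a • τ)) = toSecBC i j k (a • ofSecBC i j k τ) := by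
    rw [toSec_ofSec, ← h]
  have h3 := congrArg (ofSecBC i j k) h2
  rwa [ofSec_toSec, ofSec_toSec] at h3

/-- The map `EBC → ECan gBC hBC`. -/
def toEBC (q : EBC i j k) : ECan (gBC i j k) (hBC j k) :=
  ⟨(⟨(q.1.1.1.1, q.1.2), q.1.1.2.trans q.2⟩, toSecBC i j k ⟨(q.1.1.1.2, q.1.2), q.2⟩), rfl⟩

/-- The map `ECan gBC hBC → EBC`. -/
def ofEBC (r : ECan (gBC i j k) (hBC j k)) : EBC i j k :=
  ⟨(⟨(r.1.1.1.1, (ofSecBC i j k r.1.2).1.1), r.1.1.2.trans (congrArg k r.2)⟩,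
    r.1.1.1.2), (congrArg k r.2).symm⟩

theorem ofE_toE (q : EBC i j k) : ofEBC i j k (toEBC i j k q) = q := by
  apply Subtype.ext; apply Prod.ext
  · apply Subtype.ext; apply Prod.ext
    · rfl
    · exact congrArg (fun s : SBC i j k => s.1.1)
        (ofSec_toSec i j k ⟨(q.1.1.1.2, q.1.2), q.2⟩)
  · rfl

theorem toE_ofE (r : ECan (gBC i j k) (hBC j k)) : toEBC i j k (ofEBC i j k r) = r := by
  apply Subtype.ext; apply Prod.ext
  · exact Subtype.ext rfl
  · have h : (⟨((ofSecBC i j k r.1.2).1.1, r.1.1.1.2), (congrArg k r.2).symm⟩ : SBC i j k)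
        = ofSecBC i j k r.1.2 := Subtype.ext (Prod.ext rfl r.2)
    exact (congrArg (toSecBC i j k) h).trans (toSec_ofSec i j k r.1.2)

theorem toE_equivariant (a : G) (q : EBC i j k) :
    toEBC i j k (a • q) = a • toEBC i j k q := by
  apply Subtype.ext; apply Prod.ext
  · exact Subtype.ext rfl
  · exact toSec_equivariant i j k a ⟨(q.1.1.1.2, q.1.2), q.2⟩

/-- commutation of distributors with base change.
Base change along `k : W → Z` of the (canonical) exponential diagram for `(i, j)` is an
exponential diagram for `(g, h)`, where `h : P = Y ×_Z W → W` and `g : Q = X ×_Y P → P`;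
in particular there is a canonical `G`-isomorphism `∏_{g,h} Q ≅ W ×_Z ∏_{i,j} X`
compatible with the structure maps. -/
theorem statement0 [Finite G] :
    IsDistributor (gBC i j k) (hBC j k) (lBC i j k) (tBC i j k) (pBC i j k) ∧
    ∃ φ : Sec (gBC i j k) (hBC j k) ≃ SBC i j k,
      IsEquivariant G ⇑φ ∧ ∀ σ : Sec (gBC i j k) (hBC j k), pBC i j k (φ σ) = σ.pt := by
  refine ⟨⟨⟨toEBC i j k, ofEBC i j k, ofE_toE i j k, toE_ofE i j k⟩,
    ⟨toSecBC i j k, ofSecBC i j k, ofSec_toSec i j k, toSec_ofSec i j k⟩,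
    toE_equivariant i j k, toSec_equivariant i j k,
    fun a => rfl, fun a => rfl, fun b => rfl⟩,
    ⟨⟨ofSecBC i j k, toSecBC i j k, toSec_ofSec i j k, ofSec_toSec i j k⟩,
      ofSec_equivariant i j k, fun σ => rfl⟩⟩

end Statement0

end Tamb
end

section
/- Let G be a finite group and let i : V → X, j : X → Y, k : Y → Z be maps of finite G-sets. Suppose (a : A → X, b : A → B, q : B → Z) is a distributor for (j, k); let P := V ×_X A be the pullback of i and a, with projections h : P → V and c : P → A; and suppose (g : C → P, f : C → D, p : D → B) is a distributor for (c, b). Then (h ∘ g : C → V, f : C → D, q ∘ p : D → Z) is a distributor for (j ∘ i, k). -/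
set_option autoImplicit false

namespace Tamb

variable {G : Type} [Group G]

section DistrAux

variable {V X Y Z A B : Type}
  [MulAction G V] [MulAction G X] [MulAction G Y] [MulAction G Z]
  [MulAction G A] [MulAction G B]

/-- Congruence of sections along an equality of `Sec` elements. -/
theorem sec_congrS {i' : X →[G] Y} {j' : Y →[G] Z} {σ τ : Sec i' j'} (e : σ = τ)
    (y : Y) (h : j' y = σ.pt) (h' : j' y = τ.pt) : σ.sec y h = τ.sec y h' := by
  subst e; rfl

/-- Bundled data witnessing that `(a, b, q)` is a distributor for `(j, k)`. -/
structure DD (j : X →[G] Y) (k : Y →[G] Z) (a : A →[G] X) (b : A →[G] B) (q : B →[G] Z) where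
  α : A ≃ ECan j k
  β : B ≃ Sec j k
  hα : IsEquivariant G ⇑α
  hβ : IsEquivariant G ⇑β
  he : ∀ x, eval j k (α x) = a x
  hg : ∀ x, β (b x) = (α x).1.2
  hp : ∀ x, (β x).pt = q x

variable (i : V →[G] X) (j : X →[G] Y) (k : Y →[G] Z)
  (a : A →[G] X) (b : A →[G] B) (q : B →[G] Z)
  (d : DD j k a b q)

/-- The element of `A` associated to a fiber point. -/
def aaEl (σ : Sec (Pb.sndHom i a) b) (y : Y) (hy : k y = q σ.pt) : A :=
  d.α.symm ⟨(y, d.β σ.pt), show k y = (d.β σ.pt).pt by rw [d.hp]; exact hy⟩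

theorem aaEl_b (σ : Sec (Pb.sndHom i a) b) (y : Y) (hy : k y = q σ.pt) :
    b (aaEl i j k a b q d σ y hy) = σ.pt := by
  apply d.β.injective
  rw [d.hg, aaEl]; exact congrArg (fun t : ECan j k => t.1.2) (d.α.apply_symm_apply _)

theorem aaEl_a (σ : Sec (Pb.sndHom i a) b) (y : Y) (hy : k y = q σ.pt)
    (h' : k y = (d.β σ.pt).pt) :
    a (aaEl i j k a b q d σ y hy) = (d.β σ.pt).sec y h' := by
  rw [← d.he, aaEl]; refine (congrArg (eval j k) (d.α.apply_symm_apply _)).trans ?_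
  rfl

/-- The forward map `Sec c b → Sec (j ∘ i) k`. -/
def Phi (σ : Sec (Pb.sndHom i a) b) : Sec (gcomp j i) k where
  pt := q σ.pt
  sec y hy := (σ.sec (aaEl i j k a b q d σ y hy) (aaEl_b i j k a b q d σ y hy)).1.1
  isSec y hy := by
    have h' : k y = (d.β σ.pt).pt := by rw [d.hp]; exact hy
    set aa := aaEl i j k a b q d σ y hy with haa
    set pp := σ.sec aa (aaEl_b i j k a b q d σ y hy) with hpp
    show j (i pp.1.1) = y
    have h2 : i pp.1.1 = a pp.1.2 := pp.2
    have h3 : pp.1.2 = aa := σ.isSec _ _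
    rw [h2, h3, haa, aaEl_a i j k a b q d σ y hy h']
    exact (d.β σ.pt).isSec y h'

/-- Restriction of a section of `j ∘ i` to a section of `j`. -/
def rho (τ : Sec (gcomp j i) k) : Sec j k where
  pt := τ.pt
  sec y h := i (τ.sec y h)
  isSec y h := τ.isSec y h

/-- The backward map `Sec (j ∘ i) k → Sec c b`. -/
def Psi (τ : Sec (gcomp j i) k) : Sec (Pb.sndHom i a) b where
  pt := d.β.symm (rho i j k τ)
  sec aa hb :=
    have h2 : (d.α aa).1.2 = rho i j k τ := by rw [← d.hg, hb, Equiv.apply_symm_apply]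
    have hk : k (d.α aa).1.1 = τ.pt := by rw [(d.α aa).2, h2]; rfl
    ⟨(τ.sec (d.α aa).1.1 hk, aa),
      (sec_congrS h2 (d.α aa).1.1 (d.α aa).2 hk).symm.trans (d.he aa)⟩
  isSec aa hb := rfl

theorem rho_Phi (σ : Sec (Pb.sndHom i a) b) :
    rho i j k (Phi i j k a b q d σ) = d.β σ.pt := by
  refine Sec.ext' ((d.hp σ.pt).symm) (fun y h h' => ?_)
  have hy : k y = q σ.pt := h
  show i ((σ.sec (aaEl i j k a b q d σ y hy) (aaEl_b i j k a b q d σ y hy)).1.1)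
      = (d.β σ.pt).sec y h'
  set pp := σ.sec (aaEl i j k a b q d σ y hy) (aaEl_b i j k a b q d σ y hy) with hpp
  have h2 : i pp.1.1 = a pp.1.2 := pp.2
  have h3 : pp.1.2 = aaEl i j k a b q d σ y hy := σ.isSec _ _
  rw [h2, h3, aaEl_a i j k a b q d σ y hy h']

theorem PsiPhi (σ : Sec (Pb.sndHom i a) b) :
    Psi i j k a b q d (Phi i j k a b q d σ) = σ := by
  have hrp := rho_Phi i j k a b q d σ
  refine Sec.ext' (?_) (fun aa h h' => ?_)
  · show d.β.symm (rho i j k (Phi i j k a b q d σ)) = σ.pt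
    rw [hrp, Equiv.symm_apply_apply]
  set τ := Phi i j k a b q d σ with hτ
  have h2 : (d.α aa).1.2 = rho i j k τ := by
    rw [← d.hg, h]; exact d.β.apply_symm_apply _
  have hk : k (d.α aa).1.1 = τ.pt := by rw [(d.α aa).2, h2]; rfl
  show (⟨(τ.sec (d.α aa).1.1 hk, aa),
      (sec_congrS h2 (d.α aa).1.1 (d.α aa).2 hk).symm.trans (d.he aa)⟩ : Pb i a)
    = σ.sec aa h'
  have hyq : k (d.α aa).1.1 = q σ.pt := hk
  have heq : aaEl i j k a b q d σ (d.α aa).1.1 hyq = aa := by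
    rw [aaEl]
    have hz : (⟨((d.α aa).1.1, d.β σ.pt),
        show k (d.α aa).1.1 = (d.β σ.pt).pt by rw [d.hp]; exact hyq⟩ : ECan j k) = d.α aa := by
      refine Subtype.ext (Prod.ext rfl ?_)
      show d.β σ.pt = (d.α aa).1.2
      rw [← h', d.hg]
    rw [hz, Equiv.symm_apply_apply]
  refine Subtype.ext (Prod.ext ?_ (σ.isSec aa h').symm)
  show τ.sec (d.α aa).1.1 hk = (σ.sec aa h').1.1
  have hτsec : τ.sec (d.α aa).1.1 hk
      = (σ.sec (aaEl i j k a b q d σ (d.α aa).1.1 hyq)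
          (aaEl_b i j k a b q d σ (d.α aa).1.1 hyq)).1.1 := rfl
  rw [hτsec]
  exact congrArg (fun t => (Pb.fstHom i a) t)
    (Sec.sec_congr σ heq (h := aaEl_b i j k a b q d σ (d.α aa).1.1 hyq) (h' := h'))

theorem PhiPsi (τ : Sec (gcomp j i) k) :
    Phi i j k a b q d (Psi i j k a b q d τ) = τ := by
  set σ := Psi i j k a b q d τ with hσ
  have hqpt : q σ.pt = τ.pt := by
    show q (d.β.symm (rho i j k τ)) = τ.pt
    rw [← d.hp, Equiv.apply_symm_apply]; rfl
  refine Sec.ext' hqpt (fun y h h' => ?_)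
  set aaE := aaEl i j k a b q d σ y h with haaE
  have hbE : b aaE = σ.pt := aaEl_b i j k a b q d σ y h
  have h2 : (d.α aaE).1.2 = rho i j k τ := by
    rw [← d.hg, hbE]
    show d.β (d.β.symm (rho i j k τ)) = _
    rw [Equiv.apply_symm_apply]
  have hk : k (d.α aaE).1.1 = τ.pt := by rw [(d.α aaE).2, h2]; rfl
  show τ.sec (d.α aaE).1.1 hk = τ.sec y h'
  refine Sec.sec_congr τ ?_
  show (d.α aaE).1.1 = y
  rw [haaE]; unfold aaEl; exact congrArg (fun t : ECan j k => t.1.1) (d.α.apply_symm_apply _)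

theorem Phi_equivariant (u : G) (σ : Sec (Pb.sndHom i a) b) :
    Phi i j k a b q d (u • σ) = u • Phi i j k a b q d σ := by
  refine Sec.ext' (?_) (fun y h h' => ?_)
  · show q ((u • σ).pt) = u • q σ.pt
    rw [Sec.smul_pt, MulActionHom.map_smul]
  have h'' : k (u⁻¹ • y) = q σ.pt := by
    rw [MulActionHom.map_smul, h']
    show u⁻¹ • (u • (Phi i j k a b q d σ).pt) = _
    rw [inv_smul_smul]; rfl
  set aa2 := aaEl i j k a b q d σ (u⁻¹ • y) h'' with haa2
  have hyσ : k y = q ((u • σ).pt) := h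
  have heq : aaEl i j k a b q d (u • σ) y hyσ = u • aa2 := by
    rw [haa2, aaEl, aaEl]
    have hz : (⟨(y, d.β ((u • σ).pt)),
          show k y = (d.β ((u • σ).pt)).pt by rw [d.hp]; exact hyσ⟩ : ECan j k)
        = d.α (u • d.α.symm ⟨((u⁻¹ • y), d.β σ.pt),
            show k (u⁻¹ • y) = (d.β σ.pt).pt by rw [d.hp]; exact h''⟩) := by
      rw [d.hα]; refine Eq.trans ?_ (congrArg (u • ·) (d.α.apply_symm_apply _)).symm
      refine Subtype.ext (Prod.ext ?_ ?_)
      · exact (smul_inv_smul u y).symm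
      · show d.β ((u • σ).pt) = u • d.β σ.pt
        rw [Sec.smul_pt, d.hβ]
    rw [hz, Equiv.symm_apply_apply]
  have hb2 : b aa2 = σ.pt := aaEl_b i j k a b q d σ (u⁻¹ • y) h''
  have hbu : b (u⁻¹ • (u • aa2)) = σ.pt := by rw [inv_smul_smul]; exact hb2
  have hbu2 : b (u • aa2) = (u • σ).pt := by
    rw [MulActionHom.map_smul, hb2]; rfl
  calc ((u • σ).sec (aaEl i j k a b q d (u • σ) y hyσ)
        (aaEl_b i j k a b q d (u • σ) y hyσ)).1.1
      = ((u • σ).sec (u • aa2) hbu2).1.1 :=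
        congrArg (fun t => (Pb.fstHom i a) t)
          (Sec.sec_congr (u • σ) heq (h := aaEl_b i j k a b q d (u • σ) y hyσ) (h' := hbu2))
    _ = (u • σ.sec (u⁻¹ • (u • aa2)) hbu).1.1 :=
        congrArg (fun t => (Pb.fstHom i a) t) (Sec.smul_sec u σ (u • aa2) hbu2 hbu)
    _ = (u • σ.sec aa2 hb2).1.1 := by
        exact congrArg (fun t => (Pb.fstHom i a) (u • t))
          (Sec.sec_congr σ (inv_smul_smul u aa2) (h := hbu) (h' := hb2))
    _ = u • (σ.sec aa2 hb2).1.1 := rfl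
    _ = (u • Phi i j k a b q d σ).sec y h' :=
        (Sec.smul_sec u (Phi i j k a b q d σ) y h' h'').symm

/-- The equivalence `Sec c b ≃ Sec (j ∘ i) k`. -/
def PhiEquiv : Sec (Pb.sndHom i a) b ≃ Sec (gcomp j i) k where
  toFun := Phi i j k a b q d
  invFun := Psi i j k a b q d
  left_inv := PsiPhi i j k a b q d
  right_inv := PhiPsi i j k a b q d

theorem PhiEquiv_equivariant : IsEquivariant G ⇑(PhiEquiv i j k a b q d) :=
  Phi_equivariant i j k a b q d

/-- The equivalence of canonical pullbacks. -/
def ECanEquiv : ECan (Pb.sndHom i a) b ≃ ECan (gcomp j i) k where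
  toFun pp := ⟨((d.α pp.1.1).1.1, Phi i j k a b q d pp.1.2), by
    show k (d.α pp.1.1).1.1 = q pp.1.2.pt
    have h1 : b pp.1.1 = pp.1.2.pt := pp.2
    rw [(d.α pp.1.1).2]
    show (d.α pp.1.1).1.2.pt = q pp.1.2.pt
    rw [← d.hg, d.hp, h1]⟩
  invFun qq :=
    have pf1 : k qq.1.1 = (pHom j k) (rho i j k qq.1.2) := qq.2
    ⟨(d.α.symm ⟨(qq.1.1, rho i j k qq.1.2), pf1⟩, Psi i j k a b q d qq.1.2), by
      show b (d.α.symm ⟨(qq.1.1, rho i j k qq.1.2), pf1⟩) = d.β.symm (rho i j k qq.1.2)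
      apply d.β.injective
      rw [d.hg]; exact (congrArg (fun t : ECan j k => t.1.2) (d.α.apply_symm_apply _)).trans
        (d.β.apply_symm_apply _).symm⟩
  left_inv pp := by
    refine Subtype.ext (Prod.ext ?_ (PsiPhi i j k a b q d pp.1.2))
    show d.α.symm _ = pp.1.1
    have hba : b pp.1.1 = pp.1.2.pt := pp.2
    have hz : ∀ pf, (⟨((d.α pp.1.1).1.1, rho i j k (Phi i j k a b q d pp.1.2)),
        pf⟩ : ECan j k) = d.α pp.1.1 := by
      intro pf
      refine Subtype.ext (Prod.ext rfl ?_)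
      show rho i j k (Phi i j k a b q d pp.1.2) = (d.α pp.1.1).1.2
      rw [rho_Phi i j k a b q d pp.1.2, ← d.hg]
      exact congrArg d.β hba.symm
    exact (congrArg d.α.symm (hz _)).trans (d.α.symm_apply_apply _)
  right_inv qq := by
    refine Subtype.ext (Prod.ext ?_ (PhiPsi i j k a b q d qq.1.2))
    show (d.α (d.α.symm _)).1.1 = qq.1.1
    exact congrArg (fun t : ECan j k => t.1.1) (d.α.apply_symm_apply _)

theorem ECanEquiv_equivariant : IsEquivariant G ⇑(ECanEquiv i j k a b q d) := by
  intro u pp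
  refine Subtype.ext (Prod.ext ?_ ?_)
  · show (d.α ((u • pp).1.1)).1.1 = u • (d.α pp.1.1).1.1
    rw [show (u • pp).1.1 = u • pp.1.1 from rfl, d.hα]
    rfl
  · show Phi i j k a b q d ((u • pp).1.2) = u • Phi i j k a b q d pp.1.2
    rw [show (u • pp).1.2 = u • pp.1.2 from rfl, Phi_equivariant]

/-- Composition of distributors. -/
theorem DD.comp (d : DD j k a b q) {C D : Type} [MulAction G C] [MulAction G D]
    (g : C →[G] Pb i a) (f : C →[G] D) (p : D →[G] B)
    (h2 : IsDistributor (Pb.sndHom i a) b g f p) :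
    IsDistributor (gcomp j i) k (gcomp (Pb.fstHom i a) g) f (gcomp q p) := by
  obtain ⟨α₂, β₂, hα₂, hβ₂, he₂, hg₂, hp₂⟩ := h2
  refine ⟨α₂.trans (ECanEquiv i j k a b q d), β₂.trans (PhiEquiv i j k a b q d),
    ?_, ?_, ?_, ?_, ?_⟩
  · intro u c
    show ECanEquiv i j k a b q d (α₂ (u • c)) = u • ECanEquiv i j k a b q d (α₂ c)
    rw [hα₂]
    exact ECanEquiv_equivariant i j k a b q d u (α₂ c)
  · intro u dd
    show PhiEquiv i j k a b q d (β₂ (u • dd)) = u • PhiEquiv i j k a b q d (β₂ dd)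
    rw [hβ₂]
    exact Phi_equivariant i j k a b q d u (β₂ dd)
  · intro c
    have hba : b (α₂ c).1.1 = (α₂ c).1.2.pt := (α₂ c).2
    have hk : k (d.α (α₂ c).1.1).1.1 = q (α₂ c).1.2.pt := by
      rw [(d.α (α₂ c).1.1).2]
      show (d.α (α₂ c).1.1).1.2.pt = q (α₂ c).1.2.pt
      rw [← d.hg, d.hp, hba]
    have heq : aaEl i j k a b q d (α₂ c).1.2 (d.α (α₂ c).1.1).1.1 hk = (α₂ c).1.1 := by
      rw [aaEl]
      have hz : (⟨((d.α (α₂ c).1.1).1.1, d.β (α₂ c).1.2.pt),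
          show k (d.α (α₂ c).1.1).1.1 = (d.β (α₂ c).1.2.pt).pt by rw [d.hp]; exact hk⟩ :
            ECan j k) = d.α (α₂ c).1.1 := by
        refine Subtype.ext (Prod.ext rfl ?_)
        show d.β (α₂ c).1.2.pt = (d.α (α₂ c).1.1).1.2
        rw [← hba, d.hg]
      rw [hz, Equiv.symm_apply_apply]
    show ((α₂ c).1.2.sec (aaEl i j k a b q d (α₂ c).1.2 (d.α (α₂ c).1.1).1.1 hk)
        (aaEl_b i j k a b q d (α₂ c).1.2 (d.α (α₂ c).1.1).1.1 hk)).1.1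
      = (g c).1.1
    rw [← he₂ c]
    show _ = ((α₂ c).1.2.sec (α₂ c).1.1 hba).1.1
    exact congrArg (fun t => (Pb.fstHom i a) t)
      (Sec.sec_congr (α₂ c).1.2 heq
        (h := aaEl_b i j k a b q d (α₂ c).1.2 (d.α (α₂ c).1.1).1.1 hk) (h' := hba))
  · intro c
    show PhiEquiv i j k a b q d (β₂ (f c)) = _
    rw [hg₂ c]
    rfl
  · intro dd
    show q ((β₂ dd).pt) = q (p dd)
    rw [hp₂]

end DistrAux

/-- the distributive law, Lemma `distrlaw`.
Given `i : V → X`, `j : X → Y`, `k : Y → Z` in `Fin_G`, a distributor `(a, b, q)` for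
`(j, k)`, the pullback `P := V ×_X A` of `i` and `a` (with projections `h = fst : P → V`
and `c = snd : P → A`), and a distributor `(g, f, p)` for `(c, b)`, the triple
`(h ∘ g, f, q ∘ p)` is a distributor for `(j ∘ i, k)`. -/
theorem statement1 [Finite G]
    {V X Y Z A B C D : Type}
    [MulAction G V] [MulAction G X] [MulAction G Y] [MulAction G Z]
    [MulAction G A] [MulAction G B] [MulAction G C] [MulAction G D]
    [Finite V] [Finite X] [Finite Y] [Finite Z] [Finite A] [Finite B] [Finite C] [Finite D]
    (i : V →[G] X) (j : X →[G] Y) (k : Y →[G] Z)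
    (a : A →[G] X) (b : A →[G] B) (q : B →[G] Z)
    (hdist1 : IsDistributor j k a b q)
    (g : C →[G] Pb i a) (f : C →[G] D) (p : D →[G] B)
    (hdist2 : IsDistributor (Pb.sndHom i a) b g f p) :
    IsDistributor (gcomp j i) k (gcomp (Pb.fstHom i a) g) f (gcomp q p) := by
  obtain ⟨α₁, β₁, hα₁, hβ₁, he₁, hg₁, hp₁⟩ := hdist1
  exact DD.comp i j k a b q ⟨α₁, β₁, hα₁, hβ₁, he₁, hg₁, hp₁⟩ g f p hdist2

end Tamb
end

section
/- Let G be a finite group and let i : V → X, j : X → Y, k : Y → Z be maps of finite G-sets. Suppose (h : A → V, a : A → B, m : B → Y) is a distributor for (i, j), and (c : C → B, q : C → D, r : D → Z) is a distributor for (m, k). Let Q := A ×_B C be the pullback of a and c, with projections g : Q → A and s : Q → C. Then (h ∘ g : Q → V, q ∘ s : Q → D, r : D → Z) is a distributor for (i, k ∘ j). -/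
set_option autoImplicit false

namespace Tamb

variable {G : Type} [Group G]

section Aux

theorem sec_congr₂ {X Y Z : Type} [MulAction G X] [MulAction G Y] [MulAction G Z]
    {i : X →[G] Y} {j : Y →[G] Z} {σ τ : Sec i j} (e : σ = τ) {y y' : Y} (ey : y = y')
    {h : j y = σ.pt} {h' : j y' = τ.pt} : σ.sec y h = τ.sec y' h' := by
  subst e; subst ey; rfl

variable {V X Y Z B : Type}
  [MulAction G V] [MulAction G X] [MulAction G Y] [MulAction G Z] [MulAction G B]
  (i : V →[G] X) (j : X →[G] Y) (k : Y →[G] Z) (m : B →[G] Y)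
  (β1 : B ≃ Sec i j) (hβ1 : ∀ b, (β1 b).pt = m b)

/-- Restricting a section of `i` over a fiber of `k ∘ j` to a fiber of `j`. -/
def restrictSec (ρ : Sec i (gcomp k j)) (y : Y) (hy : k y = ρ.pt) : Sec i j where
  pt := y
  sec x hx := ρ.sec x (show k (j x) = ρ.pt by rw [show j x = y from hx]; exact hy)
  isSec x hx := ρ.isSec x _

/-- The forward map `Sec m k → Sec i (k∘j)`. -/
def ΦSec (σ : Sec m k) : Sec i (gcomp k j) where
  pt := σ.pt
  sec x hx := (β1 (σ.sec (j x) hx)).sec x (by rw [hβ1]; exact (σ.isSec _ _).symm)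
  isSec x hx := (β1 _).isSec x _

/-- The backward map `Sec i (k∘j) → Sec m k`. -/
def ΨSec (ρ : Sec i (gcomp k j)) : Sec m k where
  pt := ρ.pt
  sec y hy := β1.symm (restrictSec i j k ρ y hy)
  isSec y hy := by rw [← hβ1, Equiv.apply_symm_apply]; rfl

theorem ΨΦ (σ : Sec m k) : ΨSec i j k m β1 hβ1 (ΦSec i j k m β1 hβ1 σ) = σ := by
  refine Sec.ext' rfl fun y hy hy' => ?_
  show β1.symm (restrictSec i j k (ΦSec i j k m β1 hβ1 σ) y hy) = σ.sec y hy'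
  rw [Equiv.symm_apply_eq]
  refine Sec.ext' ?_ fun x hx hx' => ?_
  · rw [hβ1, σ.isSec]; rfl
  · exact sec_congr₂ (congrArg (⇑β1) (Sec.sec_congr σ hx)) rfl

theorem ΦΨ (ρ : Sec i (gcomp k j)) : ΦSec i j k m β1 hβ1 (ΨSec i j k m β1 hβ1 ρ) = ρ := by
  refine Sec.ext' rfl fun x hx hx' => ?_
  have e : β1 ((ΨSec i j k m β1 hβ1 ρ).sec (j x) hx) = restrictSec i j k ρ (j x) hx :=
    Equiv.apply_symm_apply _ _
  exact (sec_congr₂ (h' := rfl) e rfl).trans rfl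

/-- The canonical equivalence `Sec m k ≃ Sec i (k∘j)` when `B ≃ Sec i j` over `Y`. -/
def ΦEquiv : Sec m k ≃ Sec i (gcomp k j) :=
  ⟨ΦSec i j k m β1 hβ1, ΨSec i j k m β1 hβ1, ΨΦ i j k m β1 hβ1, ΦΨ i j k m β1 hβ1⟩

theorem ΦSec_equivariant (hβ1eq : IsEquivariant G ⇑β1) :
    IsEquivariant G (ΦSec i j k m β1 hβ1) := by
  intro g σ
  refine Sec.ext' rfl fun x hx hx' => ?_
  have h2 : k (g⁻¹ • j x) = σ.pt := by
    rw [MulActionHom.map_smul]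
    have : k (j x) = g • σ.pt := hx
    rw [this, inv_smul_smul]
  have h3 : j (g⁻¹ • x) = g⁻¹ • j x := MulActionHom.map_smul j _ _
  have h2' : k (j (g⁻¹ • x)) = σ.pt := by rw [h3]; exact h2
  have step1 : (g • σ).sec (j x) hx = g • σ.sec (g⁻¹ • j x) h2 := Sec.smul_sec g σ (j x) hx h2
  have step2 : β1 ((g • σ).sec (j x) hx) = g • β1 (σ.sec (g⁻¹ • j x) h2) := by
    rw [step1, hβ1eq]
  have pf3 : j (g⁻¹ • x) = (β1 (σ.sec (g⁻¹ • j x) h2)).pt := by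
    rw [h3, hβ1, σ.isSec]
  have pf2 : j x = (g • β1 (σ.sec (g⁻¹ • j x) h2)).pt := by
    show j x = g • (β1 (σ.sec (g⁻¹ • j x) h2)).pt
    rw [hβ1, σ.isSec, smul_inv_smul]
  calc (ΦSec i j k m β1 hβ1 (g • σ)).sec x hx
      = (β1 ((g • σ).sec (j x) hx)).sec x (by rw [hβ1]; exact ((g • σ).isSec _ _).symm) := rfl
    _ = (g • β1 (σ.sec (g⁻¹ • j x) h2)).sec x pf2 := sec_congr₂ step2 rfl
    _ = g • (β1 (σ.sec (g⁻¹ • j x) h2)).sec (g⁻¹ • x) pf3 := Sec.smul_sec _ _ _ _ _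
    _ = g • (β1 (σ.sec (j (g⁻¹ • x)) h2')).sec (g⁻¹ • x)
          (by rw [hβ1, σ.isSec]) :=
        congrArg (g • ·) (sec_congr₂ (congrArg (⇑β1) (Sec.sec_congr σ h3.symm)) rfl)
    _ = g • (ΦSec i j k m β1 hβ1 σ).sec (g⁻¹ • x) h2' := rfl
    _ = (g • ΦSec i j k m β1 hβ1 σ).sec x hx' := (Sec.smul_sec _ _ _ _ _).symm

end Aux

/-- functoriality of the norm, Lemma `functorialnorm`.
Given `i : V → X`, `j : X → Y`, `k : Y → Z` in `Fin_G`, a distributor `(h, a, m)` for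
`(i, j)`, a distributor `(c, q, r)` for `(m, k)`, and the pullback `Q := A ×_B C` of
`a` and `c` (with projections `g = fst : Q → A` and `s = snd : Q → C`), the triple
`(h ∘ g, q ∘ s, r)` is a distributor for `(i, k ∘ j)`. -/
theorem statement2 [Finite G]
    {V X Y Z A B C D : Type}
    [MulAction G V] [MulAction G X] [MulAction G Y] [MulAction G Z]
    [MulAction G A] [MulAction G B] [MulAction G C] [MulAction G D]
    [Finite V] [Finite X] [Finite Y] [Finite Z] [Finite A] [Finite B] [Finite C] [Finite D]
    (i : V →[G] X) (j : X →[G] Y) (k : Y →[G] Z)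
    (h : A →[G] V) (a : A →[G] B) (m : B →[G] Y)
    (hdist1 : IsDistributor i j h a m)
    (c : C →[G] B) (q : C →[G] D) (r : D →[G] Z)
    (hdist2 : IsDistributor m k c q r) :
    IsDistributor i (gcomp k j) (gcomp h (Pb.fstHom a c)) (gcomp q (Pb.sndHom a c)) r := by
  obtain ⟨α1, β1, hα1e, hβ1e, hev1, hg1, hpt1⟩ := hdist1
  obtain ⟨α2, β2, hα2e, hβ2e, hev2, hg2, hpt2⟩ := hdist2
  -- abbreviations
  set Φ : Sec m k ≃ Sec i (gcomp k j) := ΦEquiv i j k m β1 hpt1 with hΦ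
  -- the key fiber computation
  have e1 : ∀ p : Pb a c, j (α1 p.1.1).1.1 = (α2 p.1.2).1.1 := by
    intro p
    have h1 : j (α1 p.1.1).1.1 = (α1 p.1.1).1.2.pt := (α1 p.1.1).2
    rw [h1, ← hg1 p.1.1, hpt1, p.2, ← hev2 p.1.2]
    exact (α2 p.1.2).1.2.isSec _ _
  have e2 : ∀ p : Pb a c, k (j (α1 p.1.1).1.1) = (α2 p.1.2).1.2.pt := by
    intro p
    rw [e1 p]
    exact (α2 p.1.2).2
  -- the forward map
  let F : Pb a c → ECan i (gcomp k j) := fun p =>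
    ⟨((α1 p.1.1).1.1, ΦSec i j k m β1 hpt1 (α2 p.1.2).1.2), e2 p⟩
  -- the inverse map
  have pfC : ∀ w : ECan i (gcomp k j),
      k (j w.1.1) = (pHom m k) (ΨSec i j k m β1 hpt1 w.1.2) := fun w => w.2
  let Ce : ECan i (gcomp k j) → C := fun w =>
    α2.symm ⟨(j w.1.1, ΨSec i j k m β1 hpt1 w.1.2), pfC w⟩
  have hcCe : ∀ w : ECan i (gcomp k j),
      c (Ce w) = (ΨSec i j k m β1 hpt1 w.1.2).sec (j w.1.1) (pfC w) := by
    intro w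
    rw [← hev2 (Ce w)]
    show eval m k (α2 (α2.symm _)) = _
    exact (congrArg (eval m k) (Equiv.apply_symm_apply α2 _)).trans rfl
  have pfA : ∀ w : ECan i (gcomp k j), j w.1.1 = (pHom i j) (β1 (c (Ce w))) := by
    intro w
    show j w.1.1 = (β1 (c (Ce w))).pt
    rw [hcCe w, hpt1]
    exact ((ΨSec i j k m β1 hpt1 w.1.2).isSec (j w.1.1) (pfC w)).symm
  let Ae : ECan i (gcomp k j) → A := fun w =>
    α1.symm ⟨(w.1.1, β1 (c (Ce w))), pfA w⟩
  have hα1Ae : ∀ w : ECan i (gcomp k j),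
      α1 (Ae w) = ⟨(w.1.1, β1 (c (Ce w))), pfA w⟩ := fun w => Equiv.apply_symm_apply _ _
  have haAe : ∀ w : ECan i (gcomp k j), a (Ae w) = c (Ce w) := by
    intro w
    apply β1.injective
    rw [hg1 (Ae w), hα1Ae w]
  let Finv : ECan i (gcomp k j) → Pb a c := fun w => ⟨(Ae w, Ce w), haAe w⟩
  -- F and Finv are inverse
  have hleft : ∀ p : Pb a c, Finv (F p) = p := by
    intro p
    have hCe : Ce (F p) = p.1.2 := by
      show α2.symm _ = p.1.2
      refine (Equiv.symm_apply_eq _).mpr ?_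
      refine Subtype.ext (Prod.ext ?_ ?_)
      · exact e1 p
      · exact ΨΦ i j k m β1 hpt1 (α2 p.1.2).1.2
    have hAe : Ae (F p) = p.1.1 := by
      show α1.symm _ = p.1.1
      refine (Equiv.symm_apply_eq _).mpr ?_
      refine Subtype.ext (Prod.ext rfl ?_)
      show β1 (c (Ce (F p))) = (α1 p.1.1).1.2
      rw [hCe, ← p.2, hg1]
    exact Subtype.ext (Prod.ext hAe hCe)
  have hright : ∀ w : ECan i (gcomp k j), F (Finv w) = w := by
    intro w
    refine Subtype.ext (Prod.ext ?_ ?_)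
    · show (α1 (Ae w)).1.1 = w.1.1
      rw [hα1Ae w]
    · show ΦSec i j k m β1 hpt1 (α2 (Ce w)).1.2 = w.1.2
      have : α2 (Ce w) = ⟨(j w.1.1, ΨSec i j k m β1 hpt1 w.1.2), pfC w⟩ :=
        Equiv.apply_symm_apply _ _
      rw [this]
      exact ΦΨ i j k m β1 hpt1 w.1.2
  let α' : Pb a c ≃ ECan i (gcomp k j) := ⟨F, Finv, hleft, hright⟩
  let β' : D ≃ Sec i (gcomp k j) := β2.trans Φ
  refine ⟨α', β', ?_, ?_, ?_, ?_, ?_⟩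
  · -- equivariance of α'
    intro g p
    show F (g • p) = g • F p
    refine Subtype.ext (Prod.ext ?_ ?_)
    · show (α1 ((g • p).1.1)).1.1 = g • (α1 p.1.1).1.1
      have : α1 (g • p.1.1) = g • α1 p.1.1 := hα1e g p.1.1
      rw [show (g • p).1.1 = g • p.1.1 from rfl, this]
      rfl
    · show ΦSec i j k m β1 hpt1 (α2 ((g • p).1.2)).1.2
        = g • ΦSec i j k m β1 hpt1 (α2 p.1.2).1.2
      have h1 : α2 (g • p.1.2) = g • α2 p.1.2 := hα2e g p.1.2
      have h2 : (α2 ((g • p).1.2)).1.2 = g • (α2 p.1.2).1.2 := by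
        rw [show (g • p).1.2 = g • p.1.2 from rfl, h1]; rfl
      rw [h2]
      exact ΦSec_equivariant i j k m β1 hpt1 hβ1e g (α2 p.1.2).1.2
  · -- equivariance of β'
    intro g d
    show ΦSec i j k m β1 hpt1 (β2 (g • d)) = g • ΦSec i j k m β1 hpt1 (β2 d)
    rw [hβ2e g d]
    exact ΦSec_equivariant i j k m β1 hpt1 hβ1e g (β2 d)
  · -- evaluation compatibility
    intro p
    show (ΦSec i j k m β1 hpt1 (α2 p.1.2).1.2).sec (α1 p.1.1).1.1 (e2 p) = h p.1.1
    rw [← hev1 p.1.1]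
    have eτ : β1 ((α2 p.1.2).1.2.sec (j (α1 p.1.1).1.1) (e2 p)) = (α1 p.1.1).1.2 := by
      have h1 : (α2 p.1.2).1.2.sec (j (α1 p.1.1).1.1) (e2 p) = eval m k (α2 p.1.2) :=
        Sec.sec_congr (α2 p.1.2).1.2 (e1 p)
      rw [h1, hev2, ← p.2, hg1]
    exact sec_congr₂ eτ rfl
  · -- top map compatibility
    intro p
    show ΦSec i j k m β1 hpt1 (β2 (q p.1.2)) = ΦSec i j k m β1 hpt1 (α2 p.1.2).1.2
    rw [hg2]
  · -- right map compatibility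
    intro d
    show (β2 d).pt = r d
    exact hpt2 d

end Tamb
end

section
/- Let G be a finite group and M a semi-Mackey functor over G. The norm maps n_f defined on sT_0(M) descend to the quotient sT(M): for every G-map f : X → Y, if two elements of sT_0(M)(X) become equal in sT(M)(X), then their images under n_f become equal in sT(M)(Y). Consequently sT(M) carries induced norm maps. -/
set_option autoImplicit false

namespace Tamb

variable {G : Type} [Group G]

section CoreB

/-- A (bundled) finite `G`-set. -/
structure FinGSet (G : Type) [Group G] : Type 1 where
  carrier : Type
  [fin : Finite carrier]
  [act : MulAction G carrier]

attribute [instance] FinGSet.fin FinGSet.act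

instance : MulAction G Empty where
  smul _ e := e.elim
  one_smul e := e.elim
  mul_smul _ _ e := e.elim

/-- Bundle a finite `G`-set. -/
def mkG (G : Type) [Group G] (A : Type) [MulAction G A] [Finite A] : FinGSet G := ⟨A⟩

/-- The empty `G`-set. -/
def emptyG (G : Type) [Group G] : FinGSet G := ⟨Empty⟩
/-- The one-point `G`-set (`G/G`). -/
def ptG (G : Type) [Group G] : FinGSet G := ⟨PUnit⟩
/-- Binary coproduct of finite `G`-sets. -/
def sumG (X Y : FinGSet G) : FinGSet G := ⟨X.carrier ⊕ Y.carrier⟩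
/-- Binary product of finite `G`-sets. -/
def prodG (X Y : FinGSet G) : FinGSet G := ⟨X.carrier × Y.carrier⟩

def initHom (X : FinGSet G) : (emptyG G).carrier →[G] X.carrier :=
  ⟨fun e => e.elim, fun _ e => e.elim⟩
def toPtHom (X : FinGSet G) : X.carrier →[G] (ptG G).carrier :=
  ⟨fun _ => PUnit.unit, fun _ _ => rfl⟩
def inlHom (X Y : FinGSet G) : X.carrier →[G] (sumG X Y).carrier :=
  ⟨Sum.inl, fun _ _ => rfl⟩
def inrHom (X Y : FinGSet G) : Y.carrier →[G] (sumG X Y).carrier :=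
  ⟨Sum.inr, fun _ _ => rfl⟩
def sumMapHom {X Y X' Y' : FinGSet G} (f : X.carrier →[G] X'.carrier)
    (g : Y.carrier →[G] Y'.carrier) : (sumG X Y).carrier →[G] (sumG X' Y').carrier :=
  ⟨Sum.map f g, fun a x => by
    cases x with
    | inl v => show Sum.inl (f (a • v)) = Sum.inl (a • f v); rw [MulActionHom.map_smul]
    | inr v => show Sum.inr (g (a • v)) = Sum.inr (a • g v); rw [MulActionHom.map_smul]⟩
def sumElimHom {X Y Z : FinGSet G} (f : X.carrier →[G] Z.carrier)
    (g : Y.carrier →[G] Z.carrier) : (sumG X Y).carrier →[G] Z.carrier :=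
  ⟨Sum.elim f g, fun a x => by
    cases x with
    | inl v => show f (a • v) = a • f v; rw [MulActionHom.map_smul]
    | inr v => show g (a • v) = a • g v; rw [MulActionHom.map_smul]⟩
/-- The fold map `X ⊔ X → X`. -/
def foldHom (X : FinGSet G) : (sumG X X).carrier →[G] X.carrier :=
  sumElimHom (gid G X.carrier) (gid G X.carrier)
def prodMapHom {X Y X' Y' : FinGSet G} (f : X.carrier →[G] X'.carrier)
    (g : Y.carrier →[G] Y'.carrier) : (prodG X Y).carrier →[G] (prodG X' Y').carrier :=
  ⟨Prod.map f g, fun a x => Prod.ext (MulActionHom.map_smul f a x.1) (MulActionHom.map_smul g a x.2)⟩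
def pi1Hom (X Y : FinGSet G) : (prodG X Y).carrier →[G] X.carrier :=
  ⟨Prod.fst, fun _ _ => rfl⟩
def pi2ProdHom (X Y : FinGSet G) : (prodG X Y).carrier →[G] Y.carrier :=
  ⟨Prod.snd, fun _ _ => rfl⟩

/-- A semi-Mackey functor over `G` (with set values): restrictions and transfers,
functorial, converting coproducts into products, and satisfying the pullback
(Mackey double coset) condition. -/
structure SemiMackey (G : Type) [Group G] : Type 2 where
  obj : FinGSet G → Type 1
  nonempty : ∀ X, Nonempty (obj X)
  res : ∀ {X Y : FinGSet G}, (X.carrier →[G] Y.carrier) → obj Y → obj X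
  tr : ∀ {X Y : FinGSet G}, (X.carrier →[G] Y.carrier) → obj X → obj Y
  res_id : ∀ {X : FinGSet G} (x : obj X), res (gid G X.carrier) x = x
  res_comp : ∀ {X Y Z : FinGSet G} (i : X.carrier →[G] Y.carrier)
    (j : Y.carrier →[G] Z.carrier) (z : obj Z), res i (res j z) = res (gcomp j i) z
  tr_id : ∀ {X : FinGSet G} (x : obj X), tr (gid G X.carrier) x = x
  tr_comp : ∀ {X Y Z : FinGSet G} (i : X.carrier →[G] Y.carrier)
    (j : Y.carrier →[G] Z.carrier) (x : obj X), tr j (tr i x) = tr (gcomp j i) x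
  mackey : ∀ {X Y Z : FinGSet G} (j : X.carrier →[G] Z.carrier)
    (i : Y.carrier →[G] Z.carrier) (y : obj Y),
    res j (tr i y) =
      tr (X := mkG G (Pb j i)) (Pb.fstHom j i) (res (X := mkG G (Pb j i)) (Pb.sndHom j i) y)
  sum_bij : ∀ (X Y : FinGSet G),
    Function.Bijective (fun z : obj (sumG X Y) => (res (inlHom X Y) z, res (inrHom X Y) z))
  empty_subsingleton : Subsingleton (obj (emptyG G))

/-- A semi-Tambara functor over `G`: a semi-Mackey functor with multiplicative
norms, commuting with restrictions over pullbacks and satisfying the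
distributive law over exponential diagrams. -/
structure SemiTambara (G : Type) [Group G] extends SemiMackey G : Type 2 where
  nm : ∀ {X Y : FinGSet G}, (X.carrier →[G] Y.carrier) → obj X → obj Y
  nm_id : ∀ {X : FinGSet G} (x : obj X), nm (gid G X.carrier) x = x
  nm_comp : ∀ {X Y Z : FinGSet G} (i : X.carrier →[G] Y.carrier)
    (j : Y.carrier →[G] Z.carrier) (x : obj X), nm j (nm i x) = nm (gcomp j i) x
  nm_res : ∀ {X Y Z : FinGSet G} (j : X.carrier →[G] Z.carrier)
    (i : Y.carrier →[G] Z.carrier) (y : obj Y),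
    res j (nm i y) =
      nm (X := mkG G (Pb j i)) (Pb.fstHom j i) (res (X := mkG G (Pb j i)) (Pb.sndHom j i) y)
  distrib : ∀ {X Y Z A B : FinGSet G} (i : X.carrier →[G] Y.carrier)
    (j : Y.carrier →[G] Z.carrier) (f : A.carrier →[G] X.carrier)
    (g : A.carrier →[G] B.carrier) (h : B.carrier →[G] Z.carrier),
    IsDistributor i j f g h → ∀ x : obj X, nm j (tr i x) = tr h (nm g (res f x))

/-- The element of `M(X ⊔ Y)` corresponding to a pair `(x, y)`. -/
noncomputable def SemiMackey.pairElt (M : SemiMackey G) {X Y : FinGSet G}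
    (x : M.obj X) (y : M.obj Y) : M.obj (sumG X Y) :=
  (Equiv.ofBijective _ (M.sum_bij X Y)).symm (x, y)

/-- The addition on `M(X)` induced by transfer along the fold map. -/
noncomputable def SemiMackey.add (M : SemiMackey G) {X : FinGSet G} (x y : M.obj X) : M.obj X :=
  M.tr (foldHom X) (M.pairElt x y)

/-- The zero of `M(X)`: the transfer of the unique element of `M(∅)`. -/
noncomputable def SemiMackey.zero (M : SemiMackey G) (X : FinGSet G) : M.obj X :=
  M.tr (initHom X) (M.nonempty (emptyG G)).some

/-- The multiplication on `R(X)` induced by the norm along the fold map. -/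
noncomputable def SemiTambara.mul (R : SemiTambara G) {X : FinGSet G} (x y : R.obj X) :
    R.obj X :=
  R.nm (foldHom X) (R.toSemiMackey.pairElt x y)

/-- The multiplicative unit of `R(X)`: the norm of the unique element of `R(∅)`. -/
noncomputable def SemiTambara.one (R : SemiTambara G) (X : FinGSet G) : R.obj X :=
  R.nm (initHom X) (R.nonempty (emptyG G)).some

/-- A Mackey functor: a semi-Mackey functor all of whose values are abelian
groups under the transfer-induced addition. -/
structure Mackey (G : Type) [Group G] extends SemiMackey G : Type 2 where
  hasNeg : ∀ (X : FinGSet G) (x : obj X), ∃ y, toSemiMackey.add x y = toSemiMackey.zero X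

/-- A Tambara functor: a semi-Tambara functor all of whose values are abelian
groups under the transfer-induced addition. -/
structure Tambara (G : Type) [Group G] extends SemiTambara G : Type 2 where
  hasNeg : ∀ (X : FinGSet G) (x : obj X),
    ∃ y, toSemiMackey.add x y = toSemiMackey.zero X

/-- A map of semi-Mackey functors. -/
structure SMackHom {G : Type} [Group G] (M N : SemiMackey G) : Type 1 where
  app : ∀ X, M.obj X → N.obj X
  app_res : ∀ {X Y : FinGSet G} (f : X.carrier →[G] Y.carrier) (y : M.obj Y),
    app X (M.res f y) = N.res f (app Y y)
  app_tr : ∀ {X Y : FinGSet G} (f : X.carrier →[G] Y.carrier) (x : M.obj X),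
    app Y (M.tr f x) = N.tr f (app X x)

/-- A map of semi-Tambara functors. -/
structure STambHom {G : Type} [Group G] (M N : SemiTambara G) extends
    SMackHom M.toSemiMackey N.toSemiMackey : Type 1 where
  app_nm : ∀ {X Y : FinGSet G} (f : X.carrier →[G] Y.carrier) (x : M.obj X),
    app Y (M.nm f x) = N.nm f (app X x)

/-- A formal "transfer of a norm of an element of `M`": a pair
`(U →i V →j X, u ∈ M(U))`. -/
structure PreT {G : Type} [Group G] (M : SemiMackey G) (X : FinGSet G) : Type 1 where
  U : FinGSet G
  V : FinGSet G
  i : U.carrier →[G] V.carrier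
  j : V.carrier →[G] X.carrier
  u : M.obj U

/-- Two pairs are isomorphic. -/
def IsoRel (M : SemiMackey G) (X : FinGSet G) (a b : PreT M X) : Prop :=
  ∃ (f : b.U.carrier ≃ a.U.carrier) (g : b.V.carrier ≃ a.V.carrier)
    (hf : IsEquivariant G ⇑f) (_ : IsEquivariant G ⇑g),
    (∀ u' : b.U.carrier, a.i (f u') = g (b.i u')) ∧
    (∀ v' : b.V.carrier, a.j (g v') = b.j v') ∧
    M.res (MulActionHom.mk ⇑f hf) a.u = b.u

/-- The relation defining the free semi-Tambara functor `sT(M)`: pairs are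
identified up to isomorphism and the distributive-law relation. -/
inductive STRel (M : SemiMackey G) (X : FinGSet G) : PreT M X → PreT M X → Prop
  | iso {a b : PreT M X} : IsoRel M X a b → STRel M X a b
  | distrib {W U V A B : FinGSet G} (k : W.carrier →[G] U.carrier)
      (i : U.carrier →[G] V.carrier) (j : V.carrier →[G] X.carrier)
      (f : A.carrier →[G] W.carrier) (g : A.carrier →[G] B.carrier)
      (h : B.carrier →[G] V.carrier) :
      IsDistributor k i f g h → ∀ w : M.obj W,
      STRel M X ⟨U, V, i, j, M.tr k w⟩ ⟨A, B, g, gcomp j h, M.res f w⟩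

/-- The value of the free semi-Tambara functor on `M` at `X`. -/
def sT (M : SemiMackey G) (X : FinGSet G) : Type 1 := Quot (STRel M X)

/-- The universal map `θ_M : M → sT(M)`, at the level of representatives. -/
def thetaPre (M : SemiMackey G) (X : FinGSet G) (x : M.obj X) : PreT M X :=
  ⟨X, X, gid G X.carrier, gid G X.carrier, x⟩

/-- Transfer on representatives: postcomposition. -/
def trPre (M : SemiMackey G) {X Y : FinGSet G} (f : X.carrier →[G] Y.carrier)
    (a : PreT M X) : PreT M Y :=
  ⟨a.U, a.V, a.i, gcomp f a.j, a.u⟩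

/-- Restriction on representatives: pull back both maps. -/
def resPre (M : SemiMackey G) {X Y : FinGSet G} (f : Y.carrier →[G] X.carrier)
    (a : PreT M X) : PreT M Y where
  U := mkG G (Pb a.i (Pb.fstHom a.j f))
  V := mkG G (Pb a.j f)
  i := Pb.sndHom a.i (Pb.fstHom a.j f)
  j := Pb.sndHom a.j f
  u := M.res (X := mkG G (Pb a.i (Pb.fstHom a.j f))) (Pb.fstHom a.i (Pb.fstHom a.j f)) a.u

/-- Norm on representatives, via the canonical exponential diagram for `(j, f)`. -/
def normPre (M : SemiMackey G) {X Y : FinGSet G} (f : X.carrier →[G] Y.carrier)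
    (a : PreT M X) : PreT M Y where
  U := mkG G (Pb a.i (evalHom a.j f))
  V := mkG G (Sec a.j f)
  i := gcomp (pi2Hom a.j f) (Pb.sndHom a.i (evalHom a.j f))
  j := pHom a.j f
  u := M.res (X := mkG G (Pb a.i (evalHom a.j f))) (Pb.fstHom a.i (evalHom a.j f)) a.u

/-- Addition on representatives: disjoint union. -/
noncomputable def addPre (M : SemiMackey G) {X : FinGSet G} (a b : PreT M X) : PreT M X where
  U := sumG a.U b.U
  V := sumG a.V b.V
  i := sumMapHom a.i b.i
  j := sumElimHom a.j b.j
  u := M.pairElt a.u b.u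

/-- A pair has (pure) degree `n` if every fiber of its first map has exactly `n`
elements. -/
def DegN {M : SemiMackey G} {X : FinGSet G} (n : ℕ) (a : PreT M X) : Prop :=
  ∀ v : a.V.carrier, Nat.card {u : a.U.carrier // a.i u = v} = n

/-- A finite `G`-set over `X` (a representative for the Burnside semi-Mackey functor). -/
structure BurnPre (G : Type) [Group G] (X : FinGSet G) : Type 1 where
  A : FinGSet G
  f : A.carrier →[G] X.carrier

/-- Isomorphism of finite `G`-sets over `X`. -/
def BurnIso {X : FinGSet G} (s t : BurnPre G X) : Prop :=
  ∃ (e : s.A.carrier ≃ t.A.carrier) (_ : IsEquivariant G ⇑e), ∀ x, t.f (e x) = s.f x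

/-- The pair `(∅ → A →f X, 0)` associated to a `G`-set over `X`. -/
noncomputable def bPair (M : SemiMackey G) {X : FinGSet G} (s : BurnPre G X) : PreT M X :=
  ⟨emptyG G, s.A, initHom s.A, s.f, (M.nonempty (emptyG G)).some⟩

end CoreB



namespace Tamb

variable {G : Type} [Group G]

/-! ### Auxiliary material for Statement 3 -/

/-- Bundle an equivariant function as a `MulActionHom`. -/
def mkHom {A B : Type} [MulAction G A] [MulAction G B] (f : A → B)
    (h : IsEquivariant G f) : A →[G] B := ⟨f, h⟩

theorem equivariant_symm {A B : Type} [MulAction G A] [MulAction G B]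
    (e : A ≃ B) (h : IsEquivariant G ⇑e) : IsEquivariant G ⇑e.symm := by
  intro g b
  apply e.injective
  rw [Equiv.apply_symm_apply, h, Equiv.apply_symm_apply]

theorem Sec.sec_congrσ {X Y Z : Type} [MulAction G X] [MulAction G Y] [MulAction G Z]
    {i : X →[G] Y} {j : Y →[G] Z} {σ τ : Sec i j} (e : σ = τ) {y : Y}
    (h : j y = σ.pt) (h' : j y = τ.pt) : σ.sec y h = τ.sec y h' := by
  subst e; rfl

theorem Sec.sec_eq {X Y Z : Type} [MulAction G X] [MulAction G Y] [MulAction G Z]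
    {i : X →[G] Y} {j : Y →[G] Z} (σ : Sec i j) {y y' : Y} (e : y = y')
    (h : j y = σ.pt) : σ.sec y h = σ.sec y' (e ▸ h) := by
  subst e; rfl

theorem isDistributor_canonical {X Y Z : Type} [MulAction G X] [MulAction G Y] [MulAction G Z]
    (i : X →[G] Y) (j : Y →[G] Z) :
    IsDistributor i j (evalHom i j) (pi2Hom i j) (pHom i j) :=
  ⟨Equiv.refl _, Equiv.refl _, fun _ _ => rfl, fun _ _ => rfl, fun _ => rfl, fun _ => rfl,
    fun _ => rfl⟩

section SecTransport

variable {Va Vb X Y : Type} [MulAction G Va] [MulAction G Vb] [MulAction G X] [MulAction G Y]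
variable {ja : Va →[G] X} {jb : Vb →[G] X} {f : X →[G] Y}

/-- Transport of sections along a compatible map of `G`-sets over `X`. -/
def secMap (g : Vb → Va) (hj : ∀ v, ja (g v) = jb v) (σ : Sec jb f) : Sec ja f where
  pt := σ.pt
  sec := fun x h => g (σ.sec x h)
  isSec := fun x h => (hj _).trans (σ.isSec x h)

theorem secMap_equivariant (g : Vb → Va) (hg : IsEquivariant G g)
    (hj : ∀ v, ja (g v) = jb v) : IsEquivariant G (secMap (f := f) g hj) := by
  intro a σ
  refine Sec.ext' rfl fun x h h' => ?_
  exact hg a _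

/-- Transport of sections along a compatible equivalence is an equivalence. -/
def secEquiv (g : Vb ≃ Va) (hj : ∀ v, ja (g v) = jb v) : Sec jb f ≃ Sec ja f where
  toFun := secMap g hj
  invFun := secMap g.symm (fun v => by
    rw [← hj (g.symm v), Equiv.apply_symm_apply])
  left_inv σ := Sec.ext' rfl fun x h h' => g.symm_apply_apply _
  right_inv σ := Sec.ext' rfl fun x h h' => g.apply_symm_apply _

end SecTransport

section PbTransport

variable {Ua Va Ub Vb X Y : Type} [MulAction G Ua] [MulAction G Va] [MulAction G Ub]
  [MulAction G Vb] [MulAction G X] [MulAction G Y]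
variable {ia : Ua →[G] Va} {ja : Va →[G] X} {ib : Ub →[G] Vb} {jb : Vb →[G] X} {f : X →[G] Y}

/-- Transport of the `U`-objects of norm representatives along an isomorphism of pairs. -/
def pbMap (fe : Ub → Ua) (ge : Vb ≃ Va) (hj : ∀ v, ja (ge v) = jb v)
    (hi : ∀ u, ia (fe u) = ge (ib u)) (p : Pb ib (evalHom jb f)) :
    Pb ia (evalHom ja f) :=
  ⟨(fe p.1.1, ⟨(p.1.2.1.1, secMap (f := f) ⇑ge hj p.1.2.1.2), p.1.2.2⟩),
    (hi p.1.1).trans (congrArg ge p.2)⟩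

theorem pbMap_equivariant (fe : Ub → Ua) (hfe : IsEquivariant G fe) (ge : Vb ≃ Va)
    (hge : IsEquivariant G ⇑ge) (hj : ∀ v, ja (ge v) = jb v)
    (hi : ∀ u, ia (fe u) = ge (ib u)) :
    IsEquivariant G (pbMap (f := f) fe ge hj hi) := by
  intro a p
  refine Subtype.ext (Prod.ext (hfe a _) (Subtype.ext (Prod.ext rfl ?_)))
  exact secMap_equivariant (f := f) ⇑ge hge hj a _

/-- `pbMap` along an equivalence is an equivalence. -/
def pbEquiv (fe : Ub ≃ Ua) (ge : Vb ≃ Va) (hj : ∀ v, ja (ge v) = jb v)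
    (hi : ∀ u, ia (fe u) = ge (ib u)) : Pb ib (evalHom jb f) ≃ Pb ia (evalHom ja f) where
  toFun := pbMap (f := f) ⇑fe ge hj hi
  invFun := pbMap (f := f) ⇑fe.symm ge.symm
    (fun v => by rw [← hj (ge.symm v), Equiv.apply_symm_apply])
    (fun u => by
      apply ge.injective
      rw [Equiv.apply_symm_apply, ← hi (fe.symm u), Equiv.apply_symm_apply])
  left_inv p := Subtype.ext (Prod.ext (fe.symm_apply_apply _)
    (Subtype.ext (Prod.ext rfl ((secEquiv (f := f) ge hj).symm_apply_apply _))))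
  right_inv p := Subtype.ext (Prod.ext (fe.apply_symm_apply _)
    (Subtype.ext (Prod.ext rfl ((secEquiv (f := f) ge hj).apply_symm_apply _))))

end PbTransport

/-- Norms on representatives preserve isomorphism of pairs. -/
theorem normPre_iso (M : SemiMackey G) {X Y : FinGSet G} (f : X.carrier →[G] Y.carrier)
    {a b : PreT M X} (h : IsoRel M X a b) : IsoRel M Y (normPre M f a) (normPre M f b) := by
  obtain ⟨fe, ge, hfe, hge, hi, hj, hu⟩ := h
  have hpb : IsEquivariant G ⇑(pbEquiv (f := f) fe ge hj hi) :=
    pbMap_equivariant (f := f) ⇑fe hfe ge hge hj hi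
  refine ⟨pbEquiv (f := f) fe ge hj hi, secEquiv (f := f) ge hj, hpb,
    secMap_equivariant (f := f) ⇑ge hge hj, fun _ => rfl, fun _ => rfl, ?_⟩
  have e1 : gcomp (Pb.fstHom a.i (evalHom a.j f))
        (mkHom ⇑(pbEquiv (f := f) fe ge hj hi) hpb)
      = gcomp (mkHom ⇑fe hfe) (Pb.fstHom b.i (evalHom b.j f)) :=
    DFunLike.ext _ _ fun _ => rfl
  calc M.res (mkHom ⇑(pbEquiv (f := f) fe ge hj hi) hpb)
        (M.res (X := mkG G (Pb a.i (evalHom a.j f))) (Pb.fstHom a.i (evalHom a.j f)) a.u)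
      = M.res (X := mkG G (Pb b.i (evalHom b.j f)))
          (gcomp (Pb.fstHom a.i (evalHom a.j f))
            (mkHom ⇑(pbEquiv (f := f) fe ge hj hi) hpb)) a.u :=
        M.res_comp _ _ _
    _ = M.res (X := mkG G (Pb b.i (evalHom b.j f)))
          (gcomp (mkHom ⇑fe hfe) (Pb.fstHom b.i (evalHom b.j f))) a.u := by
        exact congrArg (fun φ => M.res (X := mkG G (Pb b.i (evalHom b.j f))) φ a.u) e1
    _ = M.res (X := mkG G (Pb b.i (evalHom b.j f))) (Pb.fstHom b.i (evalHom b.j f))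
          (M.res (mkHom ⇑fe hfe) a.u) := (M.res_comp _ _ _).symm
    _ = M.res (X := mkG G (Pb b.i (evalHom b.j f))) (Pb.fstHom b.i (evalHom b.j f)) b.u :=
        congrArg (M.res (X := mkG G (Pb b.i (evalHom b.j f)))
          (Pb.fstHom b.i (evalHom b.j f))) hu

section DistribCore

variable {W U V X Y : Type} [MulAction G W] [MulAction G U] [MulAction G V] [MulAction G X]
  [MulAction G Y]
variable (k : W →[G] U) (i : U →[G] V) (j : V →[G] X) (f : X →[G] Y)

/-- The `U`-object of the norm of `(U → V → X, t_k w)` (before applying Mackey). -/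
abbrev NU1 : Type := Pb i (evalHom j f)

/-- The pullback appearing in the Mackey condition for the norm of a transfer. -/
abbrev NQ : Type := Pb (Pb.fstHom i (evalHom j f)) k

/-- The projection `NQ → NU1`. -/
abbrev nK1 : NQ k i j f →[G] NU1 i j f := Pb.fstHom (Pb.fstHom i (evalHom j f)) k

/-- The structure map of the norm representative. -/
abbrev nI1 : NU1 i j f →[G] Sec j f := gcomp (pi2Hom j f) (Pb.sndHom i (evalHom j f))

/-- The underlying section of `j` over fibers of `f` of a section of `j ∘ p` over `f`. -/
def rhoSec (T : Sec (gcomp j (pHom k i)) f) : Sec j f where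
  pt := T.pt
  sec := fun x hx => (T.sec x hx).pt
  isSec := fun x hx => T.isSec x hx

/-- Constructor for elements of `NU1` keeping the `Pb` type head. -/
def mkP (u : U) (x : X) (ρ : Sec j f) (hx : f x = ρ.pt) (hu : i u = ρ.sec x hx) :
    NU1 i j f := ⟨(u, ⟨(x, ρ), hx⟩), hu⟩

/-- Forward comparison map of Tambara's composition lemma (`V`-level). -/
def phiV (S : Sec (nK1 k i j f) (nI1 i j f)) : Sec (gcomp j (pHom k i)) f where
  pt := S.pt.pt
  sec := fun x hx =>
    { pt := S.pt.sec x hx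
      sec := fun u hu => (S.sec ⟨(u, ⟨(x, S.pt), hx⟩), hu⟩ rfl).1.2
      isSec := fun u hu => by
        have h1 := (S.sec (⟨(u, ⟨(x, S.pt), hx⟩), hu⟩ : NU1 i j f) rfl).2
        have h2 := S.isSec (⟨(u, ⟨(x, S.pt), hx⟩), hu⟩ : NU1 i j f) rfl
        exact h1.symm.trans (congrArg (fun q : NU1 i j f => q.1.1) h2) }
  isSec := fun x hx => S.pt.isSec x hx

/-- Backward comparison map of Tambara's composition lemma (`V`-level). -/
def psiV (T : Sec (gcomp j (pHom k i)) f) : Sec (nK1 k i j f) (nI1 i j f) where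
  pt := rhoSec k i j f T
  sec := fun p hp =>
    ⟨(p, (T.sec p.1.2.1.1 (p.1.2.2.trans (congrArg Sec.pt hp))).sec p.1.1
        (p.2.trans (Sec.sec_congrσ hp p.1.2.2 (p.1.2.2.trans (congrArg Sec.pt hp))))),
      ((T.sec p.1.2.1.1 (p.1.2.2.trans (congrArg Sec.pt hp))).isSec p.1.1
        (p.2.trans (Sec.sec_congrσ hp p.1.2.2
          (p.1.2.2.trans (congrArg Sec.pt hp))))).symm⟩
  isSec := fun p hp => rfl

theorem rho_phiV (S : Sec (nK1 k i j f) (nI1 i j f)) :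
    rhoSec k i j f (phiV k i j f S) = S.pt :=
  Sec.ext' rfl fun _ _ _ => rfl

theorem phiV_psiV (T : Sec (gcomp j (pHom k i)) f) : phiV k i j f (psiV k i j f T) = T := by
  refine Sec.ext' rfl fun x hx hx' => ?_
  exact Sec.ext' rfl fun u hu hu' => rfl

theorem psiV_phiV (S : Sec (nK1 k i j f) (nI1 i j f)) : psiV k i j f (phiV k i j f S) = S := by
  refine Sec.ext' (rho_phiV k i j f S) fun p hp hp' => ?_
  refine Subtype.ext (Prod.ext (S.isSec p hp').symm ?_)
  have pf1 : f p.1.2.1.1 = (pHom j f) S.pt := p.1.2.2.trans (congrArg Sec.pt hp')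
  have pf2 : i p.1.1 = S.pt.sec p.1.2.1.1 pf1 :=
    p.2.trans (Sec.sec_congrσ hp' p.1.2.2 pf1)
  have eP : mkP i j f p.1.1 p.1.2.1.1 S.pt pf1 pf2 = p :=
    Subtype.ext (Prod.ext rfl (Subtype.ext (Prod.ext rfl hp'.symm)))
  show (S.sec (mkP i j f p.1.1 p.1.2.1.1 S.pt pf1 pf2) rfl).1.2 = (S.sec p hp').1.2
  exact congrArg (fun q : NQ k i j f => q.1.2) (Sec.sec_eq S eP rfl)

/-- The comparison equivalence at the `V`-level. -/
def vEquiv : Sec (gcomp j (pHom k i)) f ≃ Sec (nK1 k i j f) (nI1 i j f) where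
  toFun := psiV k i j f
  invFun := phiV k i j f
  left_inv := phiV_psiV k i j f
  right_inv := psiV_phiV k i j f

theorem phiV_equivariant : IsEquivariant G (phiV k i j f) := by
  intro a S
  refine Sec.ext' rfl fun x hx hx' => ?_
  refine Sec.ext' rfl fun u hu hu' => ?_
  have hx2 : f (a⁻¹ • x) = (phiV k i j f S).pt := by
    rw [MulActionHom.map_smul, hx']
    exact inv_smul_smul a _
  have huB : i (a⁻¹ • u) = ((phiV k i j f S).sec (a⁻¹ • x) hx2).pt := by
    rw [MulActionHom.map_smul, hu]
    exact inv_smul_smul a _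
  have eP : a⁻¹ • mkP i j f u x (a • S).pt hx hu
      = mkP i j f (a⁻¹ • u) (a⁻¹ • x) S.pt hx2 huB :=
    Subtype.ext (Prod.ext rfl (Subtype.ext (Prod.ext rfl (inv_smul_smul a S.pt))))
  exact congrArg (fun q : NQ k i j f => q.1.2)
    ((Sec.smul_sec a S (mkP i j f u x (a • S).pt hx hu) rfl (inv_smul_smul a S.pt)).trans
      (congrArg (a • ·) (Sec.sec_eq S eP (inv_smul_smul a S.pt))))

theorem psiV_equivariant : IsEquivariant G ⇑(vEquiv k i j f) :=
  equivariant_symm (vEquiv k i j f).symm (phiV_equivariant k i j f)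

/-- Forward comparison map of Tambara's composition lemma (`U`-level). -/
def phiU (c : ECan (nK1 k i j f) (nI1 i j f)) :
    Pb (pi2Hom k i) (evalHom (gcomp j (pHom k i)) f) :=
  ⟨(⟨(c.1.1.1.1, (phiV k i j f c.1.2).sec c.1.1.1.2.1.1
        (c.1.1.1.2.2.trans (congrArg Sec.pt c.2))),
      c.1.1.2.trans (Sec.sec_congrσ c.2 c.1.1.1.2.2
        (c.1.1.1.2.2.trans (congrArg Sec.pt c.2)))⟩,
    ⟨(c.1.1.1.2.1.1, phiV k i j f c.1.2),
      c.1.1.1.2.2.trans (congrArg Sec.pt c.2)⟩), rfl⟩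

/-- Backward comparison map of Tambara's composition lemma (`U`-level). -/
def psiU (d : Pb (pi2Hom k i) (evalHom (gcomp j (pHom k i)) f)) :
    ECan (nK1 k i j f) (nI1 i j f) :=
  ⟨(⟨(d.1.1.1.1, ⟨(d.1.2.1.1, rhoSec k i j f d.1.2.1.2), d.1.2.2⟩),
      d.1.1.2.trans (congrArg Sec.pt d.2)⟩,
    psiV k i j f d.1.2.1.2), rfl⟩

theorem phiU_psiU (d : Pb (pi2Hom k i) (evalHom (gcomp j (pHom k i)) f)) :
    phiU k i j f (psiU k i j f d) = d := by
  refine Subtype.ext (Prod.ext (Subtype.ext (Prod.ext rfl ?_))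
    (Subtype.ext (Prod.ext rfl (phiV_psiV k i j f d.1.2.1.2))))
  show (phiV k i j f (psiV k i j f d.1.2.1.2)).sec d.1.2.1.1 _ = d.1.1.1.2
  exact (Sec.sec_congrσ (phiV_psiV k i j f d.1.2.1.2) _ d.1.2.2).trans d.2.symm

theorem psiU_phiU (c : ECan (nK1 k i j f) (nI1 i j f)) :
    psiU k i j f (phiU k i j f c) = c :=
  Subtype.ext (Prod.ext (Subtype.ext (Prod.ext rfl (Subtype.ext (Prod.ext rfl
    ((rho_phiV k i j f c.1.2).trans c.2.symm))))) (psiV_phiV k i j f c.1.2))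

/-- The comparison equivalence at the `U`-level. -/
def uEquiv : Pb (pi2Hom k i) (evalHom (gcomp j (pHom k i)) f) ≃ ECan (nK1 k i j f) (nI1 i j f) where
  toFun := psiU k i j f
  invFun := phiU k i j f
  left_inv := phiU_psiU k i j f
  right_inv := psiU_phiU k i j f

theorem phiU_equivariant : IsEquivariant G (phiU k i j f) := by
  intro a c
  have h2 : f (a • c.1.1.1.2.1.1) = (a • phiV k i j f c.1.2).pt :=
    (MulActionHom.map_smul f a c.1.1.1.2.1.1).trans
      (congrArg (a • ·) (c.1.1.1.2.2.trans (congrArg Sec.pt c.2)))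
  have h3 : f (a⁻¹ • (a • c.1.1.1.2.1.1)) = (phiV k i j f c.1.2).pt := by
    rw [inv_smul_smul]
    exact c.1.1.1.2.2.trans (congrArg Sec.pt c.2)
  refine Subtype.ext (Prod.ext (Subtype.ext (Prod.ext rfl ?_)) (Subtype.ext (Prod.ext rfl
    (phiV_equivariant k i j f a c.1.2))))
  refine (Sec.sec_congrσ (phiV_equivariant k i j f a c.1.2) _ h2).trans ?_
  exact (Sec.smul_sec a (phiV k i j f c.1.2) (a • c.1.1.1.2.1.1) h2 h3).trans
    (congrArg (a • ·) (Sec.sec_eq (phiV k i j f c.1.2) (inv_smul_smul a c.1.1.1.2.1.1) h3))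

theorem psiU_equivariant : IsEquivariant G ⇑(uEquiv k i j f) :=
  equivariant_symm (uEquiv k i j f).symm (phiU_equivariant k i j f)

end DistribCore

/-- The distributive-relation case of compatibility of norms with the quotient,
for the canonical distributor. -/
theorem distrib_case (M : SemiMackey G) {Wf Uf Vf X Y : FinGSet G}
    (k : Wf.carrier →[G] Uf.carrier) (i : Uf.carrier →[G] Vf.carrier)
    (j : Vf.carrier →[G] X.carrier) (f : X.carrier →[G] Y.carrier) (w : M.obj Wf) :
    Quot.mk (STRel M Y) (normPre M f ⟨Uf, Vf, i, j, M.tr k w⟩) =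
      Quot.mk (STRel M Y) (normPre M f ⟨mkG G (ECan k i), mkG G (Sec k i), pi2Hom k i,
        gcomp j (pHom k i), M.res (X := mkG G (ECan k i)) (evalHom k i) w⟩) := by
  have e1 : normPre M f (⟨Uf, Vf, i, j, M.tr k w⟩ : PreT M X) =
      (⟨mkG G (NU1 i j f), mkG G (Sec j f), nI1 i j f, pHom j f,
        M.tr (X := mkG G (NQ k i j f)) (Y := mkG G (NU1 i j f)) (nK1 k i j f)
          (M.res (X := mkG G (NQ k i j f)) (Pb.sndHom (Pb.fstHom i (evalHom j f)) k) w)⟩ :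
        PreT M Y) :=
    congrArg
      (fun u => (⟨mkG G (NU1 i j f), mkG G (Sec j f), nI1 i j f, pHom j f, u⟩ : PreT M Y))
      (M.mackey (X := mkG G (NU1 i j f)) (Pb.fstHom i (evalHom j f)) k w)
  have e2 : STRel M Y
      (⟨mkG G (NU1 i j f), mkG G (Sec j f), nI1 i j f, pHom j f,
        M.tr (X := mkG G (NQ k i j f)) (Y := mkG G (NU1 i j f)) (nK1 k i j f)
          (M.res (X := mkG G (NQ k i j f)) (Pb.sndHom (Pb.fstHom i (evalHom j f)) k) w)⟩)
      (⟨mkG G (ECan (nK1 k i j f) (nI1 i j f)), mkG G (Sec (nK1 k i j f) (nI1 i j f)),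
        pi2Hom (nK1 k i j f) (nI1 i j f),
        gcomp (pHom j f) (pHom (nK1 k i j f) (nI1 i j f)),
        M.res (X := mkG G (ECan (nK1 k i j f) (nI1 i j f)))
          (evalHom (nK1 k i j f) (nI1 i j f))
          (M.res (X := mkG G (NQ k i j f)) (Pb.sndHom (Pb.fstHom i (evalHom j f)) k) w)⟩) :=
    STRel.distrib (W := mkG G (NQ k i j f)) (U := mkG G (NU1 i j f)) (V := mkG G (Sec j f))
      (A := mkG G (ECan (nK1 k i j f) (nI1 i j f)))
      (B := mkG G (Sec (nK1 k i j f) (nI1 i j f)))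
      (nK1 k i j f) (nI1 i j f) (pHom j f)
      (evalHom (nK1 k i j f) (nI1 i j f)) (pi2Hom (nK1 k i j f) (nI1 i j f))
      (pHom (nK1 k i j f) (nI1 i j f))
      (isDistributor_canonical (nK1 k i j f) (nI1 i j f)) _
  have e3 : IsoRel M Y
      (⟨mkG G (ECan (nK1 k i j f) (nI1 i j f)), mkG G (Sec (nK1 k i j f) (nI1 i j f)),
        pi2Hom (nK1 k i j f) (nI1 i j f),
        gcomp (pHom j f) (pHom (nK1 k i j f) (nI1 i j f)),
        M.res (X := mkG G (ECan (nK1 k i j f) (nI1 i j f)))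
          (evalHom (nK1 k i j f) (nI1 i j f))
          (M.res (X := mkG G (NQ k i j f)) (Pb.sndHom (Pb.fstHom i (evalHom j f)) k) w)⟩)
      (normPre M f ⟨mkG G (ECan k i), mkG G (Sec k i), pi2Hom k i,
        gcomp j (pHom k i), M.res (X := mkG G (ECan k i)) (evalHom k i) w⟩) := by
    refine ⟨uEquiv k i j f, vEquiv k i j f, psiU_equivariant k i j f,
      psiV_equivariant k i j f, fun _ => rfl, fun _ => rfl, ?_⟩
    have hfun : gcomp (gcomp (Pb.sndHom (Pb.fstHom i (evalHom j f)) k)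
          (evalHom (nK1 k i j f) (nI1 i j f)))
          (mkHom ⇑(uEquiv k i j f) (psiU_equivariant k i j f))
        = gcomp (evalHom k i)
          (Pb.fstHom (pi2Hom k i) (evalHom (gcomp j (pHom k i)) f)) := by
      refine DFunLike.ext _ _ fun d => ?_
      exact (Sec.sec_congrσ d.2 d.1.1.2 (d.1.1.2.trans (congrArg Sec.pt d.2))).symm
    calc M.res (mkHom ⇑(uEquiv k i j f) (psiU_equivariant k i j f))
          (M.res (X := mkG G (ECan (nK1 k i j f) (nI1 i j f)))
            (evalHom (nK1 k i j f) (nI1 i j f))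
            (M.res (X := mkG G (NQ k i j f)) (Pb.sndHom (Pb.fstHom i (evalHom j f)) k) w))
        = M.res (mkHom ⇑(uEquiv k i j f) (psiU_equivariant k i j f))
          (M.res (X := mkG G (ECan (nK1 k i j f) (nI1 i j f)))
            (gcomp (Pb.sndHom (Pb.fstHom i (evalHom j f)) k)
              (evalHom (nK1 k i j f) (nI1 i j f))) w) := by
          rw [M.res_comp (X := mkG G (ECan (nK1 k i j f) (nI1 i j f)))
            (Y := mkG G (NQ k i j f)) (evalHom (nK1 k i j f) (nI1 i j f))
            (Pb.sndHom (Pb.fstHom i (evalHom j f)) k) w]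
          rfl
      _ = M.res (X := mkG G (Pb (pi2Hom k i) (evalHom (gcomp j (pHom k i)) f)))
            (gcomp (gcomp (Pb.sndHom (Pb.fstHom i (evalHom j f)) k)
              (evalHom (nK1 k i j f) (nI1 i j f)))
              (mkHom ⇑(uEquiv k i j f) (psiU_equivariant k i j f))) w :=
          M.res_comp _ _ _
      _ = M.res (X := mkG G (Pb (pi2Hom k i) (evalHom (gcomp j (pHom k i)) f)))
            (gcomp (evalHom k i)
              (Pb.fstHom (pi2Hom k i) (evalHom (gcomp j (pHom k i)) f))) w := by
          exact congrArg
            (fun φ => M.res (X := mkG G (Pb (pi2Hom k i) (evalHom (gcomp j (pHom k i)) f))) φ w)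
            hfun
      _ = M.res (X := mkG G (Pb (pi2Hom k i) (evalHom (gcomp j (pHom k i)) f)))
            (Pb.fstHom (pi2Hom k i) (evalHom (gcomp j (pHom k i)) f))
            (M.res (X := mkG G (ECan k i)) (evalHom k i) w) :=
          (M.res_comp (X := mkG G (Pb (pi2Hom k i) (evalHom (gcomp j (pHom k i)) f)))
            (Y := mkG G (ECan k i)) (Z := Wf)
            (Pb.fstHom (pi2Hom k i) (evalHom (gcomp j (pHom k i)) f)) (evalHom k i) w).symm
  calc Quot.mk (STRel M Y) (normPre M f ⟨Uf, Vf, i, j, M.tr k w⟩)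
      = Quot.mk (STRel M Y)
          (⟨mkG G (NU1 i j f), mkG G (Sec j f), nI1 i j f, pHom j f,
            M.tr (X := mkG G (NQ k i j f)) (Y := mkG G (NU1 i j f)) (nK1 k i j f)
              (M.res (X := mkG G (NQ k i j f)) (Pb.sndHom (Pb.fstHom i (evalHom j f)) k)
                w)⟩) := congrArg (Quot.mk _) e1
    _ = Quot.mk (STRel M Y)
          (⟨mkG G (ECan (nK1 k i j f) (nI1 i j f)), mkG G (Sec (nK1 k i j f) (nI1 i j f)),
            pi2Hom (nK1 k i j f) (nI1 i j f),
            gcomp (pHom j f) (pHom (nK1 k i j f) (nI1 i j f)),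
            M.res (X := mkG G (ECan (nK1 k i j f) (nI1 i j f)))
              (evalHom (nK1 k i j f) (nI1 i j f))
              (M.res (X := mkG G (NQ k i j f)) (Pb.sndHom (Pb.fstHom i (evalHom j f)) k)
                w)⟩) := Quot.sound e2
    _ = Quot.mk (STRel M Y) (normPre M f ⟨mkG G (ECan k i), mkG G (Sec k i), pi2Hom k i,
          gcomp j (pHom k i), M.res (X := mkG G (ECan k i)) (evalHom k i) w⟩) :=
        Quot.sound (STRel.iso e3)

/-- The norm maps defined on `sT₀(M)` descend to the quotient `sT(M)`:
for every `G`-map `f : X → Y`, if two pairs become equal in `sT(M)(X)` then their norms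
become equal in `sT(M)(Y)`.  Consequently `sT(M)` carries induced norm maps. -/
theorem statement3 [Finite G] (M : SemiMackey G) {X Y : FinGSet G}
    (f : X.carrier →[G] Y.carrier) :
    (∀ a b : PreT M X, Quot.mk (STRel M X) a = Quot.mk (STRel M X) b →
      Quot.mk (STRel M Y) (normPre M f a) = Quot.mk (STRel M Y) (normPre M f b)) ∧
    ∃ n : sT M X → sT M Y,
      ∀ a : PreT M X, n (Quot.mk (STRel M X) a) = Quot.mk (STRel M Y) (normPre M f a) := by
  have key : ∀ a b : PreT M X, STRel M X a b →
      Quot.mk (STRel M Y) (normPre M f a) = Quot.mk (STRel M Y) (normPre M f b) := by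
    intro a b hab
    induction hab with
    | iso h => exact Quot.sound (STRel.iso (normPre_iso M f h))
    | @distrib W' U' V' A' B' k' i' j' f' g' h' hd w' =>
      refine (distrib_case M k' i' j' f w').trans
        (Quot.sound (STRel.iso (normPre_iso M f ?_)))
      obtain ⟨α, β, hα, hβ, hev, hβg, hpt⟩ := hd
      refine ⟨α, β, hα, hβ, fun u' => (hβg u').symm, fun v' => congrArg j' (hpt v'), ?_⟩
      have hcomp : gcomp (evalHom k' i') (mkHom ⇑α hα) = f' :=
        DFunLike.ext _ _ hev
      calc M.res (mkHom ⇑α hα)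
            (M.res (X := mkG G (ECan k' i')) (Y := W') (evalHom k' i') w')
          = M.res (X := A') (Y := W')
              (gcomp (evalHom k' i') (mkHom ⇑α hα)) w' :=
            M.res_comp (X := A') (Y := mkG G (ECan k' i')) (Z := W')
              (mkHom ⇑α hα) (evalHom k' i') w'
        _ = M.res f' w' := by rw [hcomp]
  let n : sT M X → sT M Y :=
    Quot.lift (fun a => Quot.mk (STRel M Y) (normPre M f a)) key
  exact ⟨fun a b h => congrArg n h, n, fun a => rfl⟩


end Tamb
end Tamb
end

section
/- Let G be a finite group and M a semi-Mackey functor over G. The functions θ_M(X) : M(X) → sT(M)(X), sending x to the class of (X →= X →= X, x), commute with all restrictions and transfers; that is, θ_M : M → sT(M) is a map of semi-Mackey functors. -/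
set_option autoImplicit false

namespace Tamb

variable {G : Type} [Group G]

namespace Tamb

variable {G : Type} [Group G]

theorem res_eqv (M : SemiMackey G) {X Y : FinGSet G} {f g : X.carrier →[G] Y.carrier}
    (h : ∀ x, f x = g x) (y : M.obj Y) : M.res f y = M.res g y := by
  have : f = g := DFunLike.ext f g h
  rw [this]

/-- The canonical distributor for `(f, id)`. -/
theorem distrib_id {X Y : Type} [MulAction G X] [MulAction G Y] (f : X →[G] Y) :
    IsDistributor f (gid G Y) (gid G X) (gid G X) f := by
  let β : X ≃ Sec f (gid G Y) :=
    { toFun := fun b => ⟨f b, fun _ _ => b, fun _ h => h.symm⟩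
      invFun := fun σ => σ.sec σ.pt rfl
      left_inv := fun b => rfl
      right_inv := fun σ => by
        refine Sec.ext' (σ.isSec σ.pt rfl) (fun y h h' => ?_)
        exact Sec.sec_congr σ h'.symm }
  have hβ : IsEquivariant G ⇑β := by
    intro g b
    refine Sec.ext' (MulActionHom.map_smul f g b) (fun y h h' => ?_)
    have hy : y = g • f b := h'
    have hh : (gid G Y) (g⁻¹ • y) = (β b).pt := by
      show g⁻¹ • y = f b
      rw [hy]; exact inv_smul_smul g (f b)
    rw [Sec.smul_sec g (β b) y h' hh]
    rfl
  let α : X ≃ ECan f (gid G Y) :=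
    { toFun := fun a => ⟨(f a, β a), rfl⟩
      invFun := fun q => β.symm q.1.2
      left_inv := fun a => β.symm_apply_apply a
      right_inv := fun q => by
        refine Subtype.ext (Prod.ext ?_ (β.apply_symm_apply q.1.2))
        show f (β.symm q.1.2) = q.1.1
        have h1 : f (β.symm q.1.2) = (β (β.symm q.1.2)).pt := rfl
        rw [h1, β.apply_symm_apply]
        exact q.2.symm }
  have hα : IsEquivariant G ⇑α := fun g a =>
    Subtype.ext (Prod.ext (MulActionHom.map_smul f g a) (hβ g a))
  exact ⟨α, β, hα, hβ, fun a => rfl, fun a => rfl, fun b => rfl⟩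

/-- The functions `θ_M(X) : M(X) → sT(M)(X)`, `x ↦ [(X = X = X, x)]`,
commute with all transfers and restrictions; that is, `θ_M : M → sT(M)` is a map of
semi-Mackey functors. -/
theorem statement4 [Finite G] (M : SemiMackey G) :
    (∀ {X Y : FinGSet G} (f : X.carrier →[G] Y.carrier) (x : M.obj X),
      Quot.mk (STRel M Y) (thetaPre M Y (M.tr f x)) =
        Quot.mk (STRel M Y) (trPre M f (thetaPre M X x))) ∧
    (∀ {X Y : FinGSet G} (f : Y.carrier →[G] X.carrier) (x : M.obj X),
      Quot.mk (STRel M Y) (thetaPre M Y (M.res f x)) =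
        Quot.mk (STRel M Y) (resPre M f (thetaPre M X x))) := by
  constructor
  · intro X Y f x
    have h1 : Quot.mk (STRel M Y) (thetaPre M Y (M.tr f x)) =
        Quot.mk (STRel M Y) ⟨X, X, gid G X.carrier, gcomp (gid G Y.carrier) f,
          M.res (gid G X.carrier) x⟩ :=
      Quot.sound (STRel.distrib f (gid G Y.carrier) (gid G Y.carrier)
        (gid G X.carrier) (gid G X.carrier) f (distrib_id f) x)
    have h2 : IsoRel M Y (trPre M f (thetaPre M X x))
        ⟨X, X, gid G X.carrier, gcomp (gid G Y.carrier) f, M.res (gid G X.carrier) x⟩ := by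
      refine ⟨Equiv.refl _, Equiv.refl _, fun _ _ => rfl, fun _ _ => rfl,
        fun _ => rfl, fun _ => rfl, ?_⟩
      exact res_eqv M (fun _ => rfl) x
    exact h1.trans (Quot.sound (STRel.iso h2)).symm
  · intro X Y f x
    let e' : Y.carrier ≃ Pb (gid G X.carrier) f :=
      { toFun := fun y => ⟨(f y, y), rfl⟩
        invFun := fun p => p.1.2
        left_inv := fun y => rfl
        right_inv := fun p => Subtype.ext (Prod.ext p.2.symm rfl) }
    have he' : IsEquivariant G ⇑e' := fun g y =>
      Subtype.ext (Prod.ext (MulActionHom.map_smul f g y) rfl)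
    let e : Y.carrier ≃ Pb (gid G X.carrier) (Pb.fstHom (gid G X.carrier) f) :=
      { toFun := fun y => ⟨(f y, e' y), rfl⟩
        invFun := fun p => p.1.2.1.2
        left_inv := fun y => rfl
        right_inv := fun p =>
          Subtype.ext (Prod.ext (p.1.2.2.symm.trans p.2.symm)
            (Subtype.ext (Prod.ext p.1.2.2.symm rfl))) }
    have he : IsEquivariant G ⇑e := fun g y =>
      Subtype.ext (Prod.ext (MulActionHom.map_smul f g y) (he' g y))
    have h : IsoRel M Y (resPre M f (thetaPre M X x)) (thetaPre M Y (M.res f x)) := by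
      refine ⟨e, e', he, he', fun _ => rfl, fun _ => rfl, ?_⟩
      exact (M.res_comp _ _ x).trans (res_eqv M (fun _ => rfl) x)
    exact (Quot.sound (STRel.iso h)).symm

end Tamb
end Tamb
end

section
/- Let G be a finite group and M a semi-Mackey functor over G. The unique map of semi-Tambara functors sA → sT(M) (where sA is the Burnside semi-Mackey functor, the initial semi-Tambara functor) induces an isomorphism of semi-Mackey functors sA ≅ sT^0(M), and the universal map θ_M : M → sT(M) induces an isomorphism of semi-Mackey functors M ≅ sT^1(M). -/
set_option autoImplicit false

namespace Tamb

variable {G : Type} [Group G]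

namespace Tamb

variable {G : Type} [Group G]

/-! ### Auxiliary material -/

theorem maext {A B : Type} [MulAction G A] [MulAction G B] {f g : A →[G] B}
    (h : ∀ a, f a = g a) : f = g := MulActionHom.ext h

theorem isEquivariant_symm {A B : Type} [MulAction G A] [MulAction G B] (e : A ≃ B)
    (he : IsEquivariant G ⇑e) : IsEquivariant G ⇑e.symm := by
  intro γ b
  apply e.injective
  rw [Equiv.apply_symm_apply, he, Equiv.apply_symm_apply]

/-- The equivariant inverse of an equivariant bijection. -/
noncomputable def invHom {A B : Type} [MulAction G A] [MulAction G B] (e : A →[G] B)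
    (he : Function.Bijective ⇑e) : B →[G] A :=
  ⟨fun b => (Equiv.ofBijective ⇑e he).symm b,
   isEquivariant_symm (Equiv.ofBijective ⇑e he) (fun γ a => e.map_smul γ a)⟩

@[simp] theorem invHom_comp {A B : Type} [MulAction G A] [MulAction G B] (e : A →[G] B)
    (he : Function.Bijective ⇑e) (a : A) : invHom e he (e a) = a :=
  (Equiv.ofBijective ⇑e he).symm_apply_apply a

@[simp] theorem comp_invHom {A B : Type} [MulAction G A] [MulAction G B] (e : A →[G] B)
    (he : Function.Bijective ⇑e) (b : B) : e (invHom e he b) = b :=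
  (Equiv.ofBijective ⇑e he).apply_symm_apply b

theorem obj_eq_of_isEmpty (M : SemiMackey G) {X : FinGSet G} (hX : IsEmpty X.carrier)
    (x y : M.obj X) : x = y := by
  have : Subsingleton (M.obj (emptyG G)) := M.empty_subsingleton
  let e : (emptyG G).carrier →[G] X.carrier := ⟨fun ε => ε.elim, fun _ ε => ε.elim⟩
  let e' : X.carrier →[G] (emptyG G).carrier :=
    ⟨fun c => (hX.false c).elim, fun γ c => (hX.false c).elim⟩
  have hh : gcomp e e' = gid G X.carrier := maext (fun c => (hX.false c).elim)
  calc x = M.res (gid G X.carrier) x := (M.res_id x).symm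
    _ = M.res e' (M.res e x) := by rw [M.res_comp, hh]
    _ = M.res e' (M.res e y) := by rw [Subsingleton.elim (M.res e x) (M.res e y)]
    _ = M.res (gid G X.carrier) y := by rw [M.res_comp, hh]
    _ = y := M.res_id y

/-- `G`-subsets of a finite `G`-set as finite `G`-sets. -/
def subFS (C : FinGSet G) (P : C.carrier → Prop)
    (hP : ∀ (γ : G) (c : C.carrier), P c → P (γ • c)) : FinGSet G :=
  letI : SMul G {c : C.carrier // P c} := ⟨fun γ q => ⟨γ • q.1, hP γ q.1 q.2⟩⟩
  letI : MulAction G {c : C.carrier // P c} :=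
    { one_smul := fun q => Subtype.ext (one_smul G q.1)
      mul_smul := fun γ δ q => Subtype.ext (mul_smul γ δ q.1) }
  FinGSet.mk {c : C.carrier // P c}

@[simp] theorem subFS_smul_val {C : FinGSet G} {P : C.carrier → Prop}
    {hP : ∀ (γ : G) (c : C.carrier), P c → P (γ • c)} (γ : G)
    (q : (subFS C P hP).carrier) : (γ • q).1 = γ • q.1 := rfl

def incFS (C : FinGSet G) (P : C.carrier → Prop)
    (hP : ∀ (γ : G) (c : C.carrier), P c → P (γ • c)) :
    (subFS C P hP).carrier →[G] C.carrier := ⟨fun q => q.1, fun _ _ => rfl⟩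

@[simp] theorem incFS_apply {C : FinGSet G} {P : C.carrier → Prop}
    {hP : ∀ (γ : G) (c : C.carrier), P c → P (γ • c)} (q : (subFS C P hP).carrier) :
    incFS C P hP q = q.1 := rfl

section Cast

def subFst {X Y : FinGSet G} (P : (prodG X Y).carrier → Prop)
    (hP : ∀ (γ : G) (p : (prodG X Y).carrier), P p → P (γ • p)) :
    (subFS (prodG X Y) P hP).carrier →[G] X.carrier := ⟨fun q => q.1.1, fun _ _ => rfl⟩

def subSnd {X Y : FinGSet G} (P : (prodG X Y).carrier → Prop)
    (hP : ∀ (γ : G) (p : (prodG X Y).carrier), P p → P (γ • p)) :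
    (subFS (prodG X Y) P hP).carrier →[G] Y.carrier := ⟨fun q => q.1.2, fun _ _ => rfl⟩

theorem master (M : SemiMackey G) {X Y : FinGSet G} (P Q : (prodG X Y).carrier → Prop)
    (hPQ : P = Q) (hP : ∀ (γ : G) (p : (prodG X Y).carrier), P p → P (γ • p))
    (hQ : ∀ (γ : G) (p : (prodG X Y).carrier), Q p → Q (γ • p)) (y : M.obj Y) :
    M.tr (X := subFS (prodG X Y) P hP) (subFst P hP)
      (M.res (X := subFS (prodG X Y) P hP) (subSnd P hP) y) =
    M.tr (X := subFS (prodG X Y) Q hQ) (subFst Q hQ)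
      (M.res (X := subFS (prodG X Y) Q hQ) (subSnd Q hQ) y) := by
  subst hPQ
  rfl

theorem pbinv {X Y Z : FinGSet G} (f : X.carrier →[G] Z.carrier)
    (g : Y.carrier →[G] Z.carrier) :
    ∀ (γ : G) (p : (prodG X Y).carrier), f p.1 = g p.2 → f (γ • p).1 = g (γ • p).2 := by
  intro γ p h
  show f (γ • p.1) = g (γ • p.2)
  rw [MulActionHom.map_smul, MulActionHom.map_smul, h]

theorem pb_as_sub (M : SemiMackey G) {X Y Z : FinGSet G} (f : X.carrier →[G] Z.carrier)
    (g : Y.carrier →[G] Z.carrier) (y : M.obj Y) :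
    M.tr (X := mkG G (Pb f g)) (Pb.fstHom f g) (M.res (X := mkG G (Pb f g)) (Pb.sndHom f g) y)
      = M.tr (X := subFS (prodG X Y) (fun p => f p.1 = g p.2) (pbinv f g))
          (subFst (fun p => f p.1 = g p.2) (pbinv f g))
          (M.res (X := subFS (prodG X Y) (fun p => f p.1 = g p.2) (pbinv f g))
          (subSnd (fun p => f p.1 = g p.2) (pbinv f g)) y) := rfl

theorem res_tr_iso (M : SemiMackey G) {C D : FinGSet G} (e : C.carrier →[G] D.carrier)
    (hinj : Function.Injective ⇑e) (y : M.obj C) : M.res e (M.tr e y) = y := by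
  have h1 := M.mackey e e y
  have h2 := M.mackey (gid G C.carrier) (gid G C.carrier) y
  have hPQ : (fun p : (prodG C C).carrier => e p.1 = e p.2) =
      (fun p : (prodG C C).carrier =>
        (gid G C.carrier) p.1 = (gid G C.carrier) p.2) := by
    funext p
    apply propext
    constructor
    · intro h
      exact hinj h
    · intro h
      have h' : p.1 = p.2 := h
      exact congrArg (fun t => e t) h'
  have h3 := master M _ _ hPQ (pbinv e e) (pbinv (gid G C.carrier) (gid G C.carrier)) y
  rw [pb_as_sub] at h1 h2
  rw [h1, h3, ← h2, M.tr_id, M.res_id]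

theorem tr_res_iso (M : SemiMackey G) {C D : FinGSet G} (e : C.carrier →[G] D.carrier)
    (he : Function.Bijective ⇑e) (x : M.obj D) : M.tr e (M.res e x) = x := by
  have hinj : Function.Injective (fun z : M.obj D => M.res e z) := by
    intro p q hpq
    have h1 : gcomp e (invHom e he) = gid G D.carrier := maext (fun d => comp_invHom e he d)
    calc p = M.res (gid G D.carrier) p := (M.res_id p).symm
      _ = M.res (invHom e he) (M.res e p) := by rw [M.res_comp, h1]
      _ = M.res (invHom e he) (M.res e q) := by
            show M.res (invHom e he) ((fun z : M.obj D => M.res e z) p) = _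
            rw [hpq]
      _ = M.res (gid G D.carrier) q := by rw [M.res_comp, h1]
      _ = q := M.res_id q
  apply hinj
  show M.res e (M.tr e (M.res e x)) = M.res e x
  rw [res_tr_iso M e he.injective]

end Cast

section Fibers

/-- The fiber of an equivariant map. -/
abbrev fib {U V : Type} [MulAction G U] [MulAction G V] (i : U →[G] V) (v : V) : Type :=
  {u : U // i u = v}

def fibEquiv {U V : Type} [MulAction G U] [MulAction G V] (i : U →[G] V) (γ : G) (v : V) :
    fib i v ≃ fib i (γ • v) :=
  ⟨fun q => ⟨γ • q.1, by rw [MulActionHom.map_smul, q.2]⟩,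
   fun q => ⟨γ⁻¹ • q.1, by rw [MulActionHom.map_smul, q.2, inv_smul_smul]⟩,
   fun q => Subtype.ext (inv_smul_smul γ q.1),
   fun q => Subtype.ext (smul_inv_smul γ q.1)⟩

theorem degP_smul {U V : Type} [MulAction G U] [MulAction G V] (i : U →[G] V) (n : ℕ)
    (γ : G) (v : V) (h : Nat.card (fib i v) = n) : Nat.card (fib i (γ • v)) = n := by
  rw [← Nat.card_congr (fibEquiv i γ v), h]

theorem card_zero_isEmpty {T : Type} [Finite T] (h : Nat.card T = 0) : IsEmpty T := by
  rcases Nat.card_eq_zero.mp h with h' | h'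
  · exact h'
  · haveI := h'
    exact (not_finite T).elim

variable (M : SemiMackey G) {Y : FinGSet G}

/-- The (pure) degree-`n` part of the middle `G`-set of a pair. -/
def VnFS (a : PreT M Y) (n : ℕ) : FinGSet G :=
  subFS a.V (fun v => Nat.card (fib a.i v) = n) (fun γ v h => degP_smul a.i n γ v h)

theorem fib_sub (a : PreT M Y) (v : (VnFS M a 1).carrier) :
    Subsingleton (fib a.i v.1) ∧ Nonempty (fib a.i v.1) :=
  Nat.card_eq_one_iff_unique.mp v.2

noncomputable def secFun (a : PreT M Y) (v : (VnFS M a 1).carrier) : a.U.carrier :=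
  (Classical.choice (fib_sub M a v).2).1

theorem secFun_spec (a : PreT M Y) (v : (VnFS M a 1).carrier) :
    a.i (secFun M a v) = v.1 :=
  (Classical.choice (fib_sub M a v).2).2

theorem secFun_unique (a : PreT M Y) (v : (VnFS M a 1).carrier) (u : a.U.carrier)
    (hu : a.i u = v.1) : u = secFun M a v := by
  have := (fib_sub M a v).1
  exact congrArg Subtype.val
    (Subsingleton.elim (⟨u, hu⟩ : fib a.i v.1) ⟨secFun M a v, secFun_spec M a v⟩)

noncomputable def secHom (a : PreT M Y) : (VnFS M a 1).carrier →[G] a.U.carrier :=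
  ⟨fun v => secFun M a v, by
    intro γ v
    refine (secFun_unique M a (γ • v) (γ • secFun M a v) ?_).symm
    rw [MulActionHom.map_smul, secFun_spec]
    rfl⟩

@[simp] theorem secHom_apply (a : PreT M Y) (v : (VnFS M a 1).carrier) :
    secHom M a v = secFun M a v := rfl

def VnInc (a : PreT M Y) (n : ℕ) : (VnFS M a n).carrier →[G] a.V.carrier :=
  incFS a.V _ _

@[simp] theorem VnInc_apply (a : PreT M Y) (n : ℕ) (v : (VnFS M a n).carrier) :
    VnInc M a n v = v.1 := rfl

/-- The degree-1 invariant of a pair. -/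
noncomputable def Psi (a : PreT M Y) : M.obj Y :=
  M.tr (gcomp a.j (VnInc M a 1)) (M.res (secHom M a) a.u)

/-- The degree-0 (Burnside) invariant of a pair. -/
def PhiRep (a : PreT M Y) : BurnPre G Y :=
  ⟨VnFS M a 0, gcomp a.j (VnInc M a 0)⟩

def Phi (a : PreT M Y) : Quot (@BurnIso G _ Y) := Quot.mk _ (PhiRep M a)

theorem theta_deg1 (x : M.obj Y) : DegN 1 (thetaPre M Y x) := by
  intro v
  haveI : Unique {u : Y.carrier // gid G Y.carrier u = v} :=
    { default := ⟨v, rfl⟩, uniq := fun q => Subtype.ext q.2 }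
  show Nat.card {u : Y.carrier // gid G Y.carrier u = v} = 1
  exact Nat.card_unique

theorem bPair_deg0 (s : BurnPre G Y) : DegN 0 (bPair M s) := by
  intro v
  haveI : IsEmpty {u : (bPair M s).U.carrier // (bPair M s).i u = v} :=
    ⟨fun q => Empty.elim q.1⟩
  exact Nat.card_of_isEmpty

theorem deg0_isEmpty (a : PreT M Y) (h : DegN 0 a) : IsEmpty a.U.carrier := by
  constructor
  intro u
  haveI : Finite {u' : a.U.carrier // a.i u' = a.i u} := Subtype.finite
  exact (card_zero_isEmpty (h (a.i u))).false ⟨u, rfl⟩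

theorem psi_theta (x : M.obj Y) : Psi M (thetaPre M Y x) = x := by
  have hbij : Function.Bijective ⇑(VnInc M (thetaPre M Y x) 1) := by
    constructor
    · intro q q' hqq
      exact Subtype.ext hqq
    · intro v
      exact ⟨⟨v, theta_deg1 M x v⟩, rfl⟩
  have h1 : secHom M (thetaPre M Y x) = VnInc M (thetaPre M Y x) 1 :=
    maext (fun v => (secFun_unique M (thetaPre M Y x) v v.1 rfl).symm)
  have h2 : gcomp (thetaPre M Y x).j (VnInc M (thetaPre M Y x) 1) =
      VnInc M (thetaPre M Y x) 1 :=
    maext (fun v => rfl)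
  show M.tr (gcomp (thetaPre M Y x).j (VnInc M (thetaPre M Y x) 1))
    (M.res (secHom M (thetaPre M Y x)) x) = x
  rw [h1, h2]
  exact tr_res_iso M _ hbij x

end Fibers

section SecHelpers

theorem sec_congr2 {X Y Z : Type} [MulAction G X] [MulAction G Y] [MulAction G Z]
    {i : X →[G] Y} {j : Y →[G] Z} {σ τ : Sec i j} (hστ : σ = τ) {y y' : Y} (e : y = y')
    {h : j y = σ.pt} {h' : j y' = τ.pt} : σ.sec y h = τ.sec y' h' := by
  subst hστ
  exact Sec.sec_congr σ e

variable {V Z : Type} [MulAction G V] [MulAction G Z]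

def secOf (j : V →[G] Z) (v : V) : Sec j (gid G Z) :=
  ⟨j v, fun _ _ => v, fun y h => h.symm⟩

theorem secOf_equivariant (j : V →[G] Z) : IsEquivariant G (secOf j) := by
  intro γ v
  refine Sec.ext' ?_ (fun y h h' => ?_)
  · show j (γ • v) = γ • j v
    rw [MulActionHom.map_smul]
  · rfl

def eSecEquiv (j : V →[G] Z) : V ≃ Sec j (gid G Z) where
  toFun := secOf j
  invFun σ := σ.sec σ.pt rfl
  left_inv v := rfl
  right_inv σ := Sec.ext' (σ.isSec σ.pt rfl) (fun y h h' => Sec.sec_congr σ h'.symm)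

theorem eSecEquiv_equivariant (j : V →[G] Z) : IsEquivariant G ⇑(eSecEquiv j) :=
  secOf_equivariant j

def eCanEquiv (j : V →[G] Z) : V ≃ ECan j (gid G Z) where
  toFun v := ⟨(j v, secOf j v), rfl⟩
  invFun q := q.1.2.sec q.1.1 q.2
  left_inv v := rfl
  right_inv q := by
    refine Subtype.ext (Prod.ext (q.1.2.isSec q.1.1 q.2) ?_)
    refine Sec.ext' ((q.1.2.isSec q.1.1 q.2).trans q.2) (fun y h h' => ?_)
    exact Sec.sec_congr q.1.2 ((q.2 : (q.1.1 : Z) = q.1.2.pt).trans h'.symm)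

theorem eCanEquiv_equivariant (j : V →[G] Z) : IsEquivariant G ⇑(eCanEquiv j) := by
  intro γ v
  exact Subtype.ext (Prod.ext (MulActionHom.map_smul j γ v) (secOf_equivariant j γ v))

end SecHelpers

section FibEquivs

/-- Fiber equivalence coming from an isomorphism of pairs. -/
def isoFibEquiv {U V U' V' : Type} [MulAction G U] [MulAction G V] [MulAction G U']
    [MulAction G V'] (iA : U →[G] V) (iB : U' →[G] V') (f : U' ≃ U) (g : V' ≃ V)
    (hig : ∀ u', iA (f u') = g (iB u')) (v : V') : fib iB v ≃ fib iA (g v) where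
  toFun u' := ⟨f u'.1, by rw [hig, u'.2]⟩
  invFun u := ⟨f.symm u.1, by
    apply g.injective
    rw [← hig, Equiv.apply_symm_apply, u.2]⟩
  left_inv u' := Subtype.ext (f.symm_apply_apply u'.1)
  right_inv u := Subtype.ext (f.apply_symm_apply u.1)

/-- Fiber equivalence coming from a distributor. -/
def distribFibEquiv {W U V A B : Type} [MulAction G W] [MulAction G U] [MulAction G V]
    [MulAction G A] [MulAction G B] (k : W →[G] U) (i : U →[G] V) (g : A →[G] B)
    (α : A ≃ ECan k i) (β : B ≃ Sec k i) (hβg : ∀ a, β (g a) = (α a).1.2) (b' : B) :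
    {a' : A // g a' = b'} ≃ {u : U // i u = (β b').pt} where
  toFun a' := ⟨(α a'.1).1.1, by
    have h2 := (α a'.1).2
    have h3 : (α a'.1).1.2 = β b' := (hβg a'.1).symm.trans (congrArg β a'.2)
    rw [h3] at h2
    exact h2⟩
  invFun u := ⟨α.symm ⟨(u.1, β b'), u.2⟩, by
    apply β.injective
    rw [hβg (α.symm ⟨(u.1, β b'), u.2⟩)]
    exact congrArg (fun q : ECan k i => q.1.2) (α.apply_symm_apply _)⟩
  left_inv a' := by
    refine Subtype.ext ?_
    refine (Equiv.symm_apply_eq α).mpr ?_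
    exact Subtype.ext (Prod.ext rfl ((congrArg β a'.2).symm.trans (hβg a'.1)))
  right_inv u :=
    Subtype.ext (congrArg (fun q : ECan k i => q.1.1)
      (α.apply_symm_apply ⟨(u.1, β b'), u.2⟩))

end FibEquivs

section Invariance

variable (M : SemiMackey G) {Y : FinGSet G}

theorem psi_iso (a b : PreT M Y) (hiso : IsoRel M Y a b) : Psi M a = Psi M b := by
  obtain ⟨f, g, hf, hg, hig, hjg, hres⟩ := hiso
  have hcard : ∀ v₁ : (VnFS M b 1).carrier, Nat.card (fib a.i (g v₁.1)) = 1 := by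
    intro v₁
    rw [← Nat.card_congr (isoFibEquiv a.i b.i f g hig v₁.1)]
    exact v₁.2
  let g₁ : (VnFS M b 1).carrier →[G] (VnFS M a 1).carrier :=
    ⟨fun v₁ => ⟨g v₁.1, hcard v₁⟩, fun γ v₁ => Subtype.ext (hg γ v₁.1)⟩
  have hg₁ : Function.Bijective ⇑g₁ := by
    constructor
    · intro p q hpq
      exact Subtype.ext (g.injective (congrArg Subtype.val hpq))
    · intro v₁
      refine ⟨⟨g.symm v₁.1, ?_⟩, Subtype.ext (g.apply_symm_apply v₁.1)⟩
      show Nat.card (fib b.i (g.symm v₁.1)) = 1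
      rw [Nat.card_congr (isoFibEquiv a.i b.i f g hig (g.symm v₁.1)), g.apply_symm_apply]
      exact v₁.2
  have idA : gcomp b.j (VnInc M b 1) = gcomp (gcomp a.j (VnInc M a 1)) g₁ :=
    maext (fun v₁ => (hjg v₁.1).symm)
  have hres' : M.res (secHom M b) b.u = M.res g₁ (M.res (secHom M a) a.u) := by
    rw [← hres, M.res_comp, M.res_comp]
    have idB : gcomp (MulActionHom.mk ⇑f hf) (secHom M b) = gcomp (secHom M a) g₁ :=
      maext (fun v₁ => secFun_unique M a (g₁ v₁) (f (secFun M b v₁)) (by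
        rw [hig, secFun_spec]
        rfl))
    rw [idB]
  calc Psi M a = M.tr (gcomp a.j (VnInc M a 1)) (M.res (secHom M a) a.u) := rfl
    _ = M.tr (gcomp a.j (VnInc M a 1))
          (M.tr g₁ (M.res g₁ (M.res (secHom M a) a.u))) := by
        rw [tr_res_iso M g₁ hg₁]
    _ = M.tr (gcomp (gcomp a.j (VnInc M a 1)) g₁)
          (M.res g₁ (M.res (secHom M a) a.u)) := M.tr_comp _ _ _
    _ = M.tr (gcomp b.j (VnInc M b 1)) (M.res (secHom M b) b.u) := by rw [idA, hres']
    _ = Psi M b := rfl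

theorem psi_distrib {W U V A B : FinGSet G}
    (k : W.carrier →[G] U.carrier) (i : U.carrier →[G] V.carrier)
    (j : V.carrier →[G] Y.carrier) (f : A.carrier →[G] W.carrier)
    (g : A.carrier →[G] B.carrier) (h : B.carrier →[G] V.carrier)
    (hD : IsDistributor k i f g h) (w : M.obj W) :
    Psi M (⟨U, V, i, j, M.tr k w⟩ : PreT M Y) = Psi M ⟨A, B, g, gcomp j h, M.res f w⟩ := by
  obtain ⟨α, β, hα, hβ, hαf, hβg, hβh⟩ := hD
  set apre : PreT M Y := ⟨U, V, i, j, M.tr k w⟩ with hapre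
  set bpre : PreT M Y := ⟨A, B, g, gcomp j h, M.res f w⟩ with hbpre
  have secB_spec : ∀ v : (VnFS M bpre 1).carrier, g (secFun M bpre v) = v.1 :=
    fun v => secFun_spec M bpre v
  have hkf : ∀ a₀ : A.carrier, k (f a₀) = (α a₀).1.1 := by
    intro a₀
    rw [← hαf a₀]
    exact (α a₀).1.2.isSec (α a₀).1.1 (α a₀).2
  have hαpt : ∀ a₀ : A.carrier, i ((α a₀).1.1) = (β (g a₀)).pt := by
    intro a₀
    rw [hβg a₀]
    exact (α a₀).2
  have c1 : ∀ b₁ : (VnFS M bpre 1).carrier,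
      Nat.card {u : U.carrier // i u = (β b₁.1).pt} = 1 :=
    fun b₁ => (Nat.card_congr (distribFibEquiv k i g α β hβg b₁.1)).symm.trans b₁.2
  let ιf : (VnFS M bpre 1).carrier → Pb (secHom M apre) k := fun b₁ =>
    ⟨(⟨(β b₁.1).pt, c1 b₁⟩, f (secFun M bpre b₁)), by
      have h1 : i ((α (secFun M bpre b₁)).1.1) = (β b₁.1).pt := by
        rw [hαpt (secFun M bpre b₁), secB_spec b₁]
      have h2 := secFun_unique M apre ⟨(β b₁.1).pt, c1 b₁⟩ ((α (secFun M bpre b₁)).1.1) h1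
      show secFun M apre ⟨(β b₁.1).pt, c1 b₁⟩ = k (f (secFun M bpre b₁))
      rw [hkf (secFun M bpre b₁), ← h2]⟩
  have hι : IsEquivariant G ιf := by
    intro γ b₁
    refine Subtype.ext (Prod.ext (Subtype.ext ?_) ?_)
    · show (β (γ • b₁.1)).pt = γ • (β b₁.1).pt
      rw [hβ γ b₁.1]
      rfl
    · show f (secFun M bpre (γ • b₁)) = γ • f (secFun M bpre b₁)
      rw [show secFun M bpre (γ • b₁) = γ • secFun M bpre b₁ from
        MulActionHom.map_smul (secHom M bpre) γ b₁]
      exact MulActionHom.map_smul f γ _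
  let σOf : Pb (secHom M apre) k → Sec k i := fun p =>
    { pt := p.1.1.1
      sec := fun _ _ => p.1.2
      isSec := fun u hu => p.2.symm.trans (secFun_unique M apre p.1.1 u hu).symm }
  let invι : Pb (secHom M apre) k → (VnFS M bpre 1).carrier := fun p =>
    ⟨β.symm (σOf p), by
      show Nat.card (fib g (β.symm (σOf p))) = 1
      have h3 : (β (β.symm (σOf p))).pt = p.1.1.1 := by rw [Equiv.apply_symm_apply]
      rw [Nat.card_congr (distribFibEquiv k i g α β hβg (β.symm (σOf p))), h3]
      exact p.1.1.2⟩
  let ιE : (VnFS M bpre 1).carrier ≃ Pb (secHom M apre) k :=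
    { toFun := ιf
      invFun := invι
      left_inv := fun b₁ => by
        refine Subtype.ext ?_
        show β.symm (σOf (ιf b₁)) = b₁.1
        have hσ : σOf (ιf b₁) = β b₁.1 := by
          refine Sec.ext' rfl (fun u hu hu' => ?_)
          show f (secFun M bpre b₁) = (β b₁.1).sec u hu'
          rw [← hαf (secFun M bpre b₁)]
          show ((α (secFun M bpre b₁)).1.2).sec ((α (secFun M bpre b₁)).1.1)
            ((α (secFun M bpre b₁)).2) = (β b₁.1).sec u hu'
          refine sec_congr2 ?_ ?_
          · rw [← hβg (secFun M bpre b₁), secB_spec b₁]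
          · refine congrArg Subtype.val (@Subsingleton.elim
              {u' : U.carrier // i u' = (β b₁.1).pt}
              (Nat.card_eq_one_iff_unique.mp (c1 b₁)).1
              ⟨(α (secFun M bpre b₁)).1.1, by rw [hαpt _, secB_spec b₁]⟩ ⟨u, hu'⟩)
        rw [hσ, Equiv.symm_apply_apply]
      right_inv := fun p => by
        refine Subtype.ext (Prod.ext (Subtype.ext ?_) ?_)
        · show (β (β.symm (σOf p))).pt = p.1.1.1
          rw [Equiv.apply_symm_apply]
        · show f (secFun M bpre (invι p)) = p.1.2
          rw [← hαf (secFun M bpre (invι p))]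
          have hσ1 : (α (secFun M bpre (invι p))).1.2 = σOf p := by
            rw [← hβg (secFun M bpre (invι p)), secB_spec (invι p)]
            show β (β.symm (σOf p)) = σOf p
            rw [Equiv.apply_symm_apply]
          have hpf : i ((α (secFun M bpre (invι p))).1.1) = (σOf p).pt := by
            rw [← hσ1]
            exact (α (secFun M bpre (invι p))).2
          show ((α (secFun M bpre (invι p))).1.2).sec ((α (secFun M bpre (invι p))).1.1)
            ((α (secFun M bpre (invι p))).2) = p.1.2
          exact sec_congr2 hσ1 rfl (h' := hpf) }
  let ιHom : (VnFS M bpre 1).carrier →[G] (mkG G (Pb (secHom M apre) k)).carrier :=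
    ⟨ιf, hι⟩
  have hιbij : Function.Bijective ⇑ιHom := ιE.bijective
  have hL : Psi M apre =
      M.tr (X := mkG G (Pb (secHom M apre) k))
        (gcomp (gcomp j (VnInc M apre 1)) (Pb.fstHom (secHom M apre) k))
        (M.res (X := mkG G (Pb (secHom M apre) k)) (Pb.sndHom (secHom M apre) k) w) := by
    show M.tr (gcomp j (VnInc M apre 1)) (M.res (secHom M apre) (M.tr k w)) = _
    rw [M.mackey (secHom M apre) k w]
    exact M.tr_comp _ _ _
  have e2 : gcomp f (secHom M bpre) = gcomp (Pb.sndHom (secHom M apre) k) ιHom :=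
    maext (fun b₁ => rfl)
  have e3 : gcomp (gcomp j h) (VnInc M bpre 1) =
      gcomp (gcomp (gcomp j (VnInc M apre 1)) (Pb.fstHom (secHom M apre) k)) ιHom :=
    maext (fun b₁ => (congrArg (fun z => j z) (hβh b₁.1)).symm)
  rw [hL]
  show M.tr (X := mkG G (Pb (secHom M apre) k))
      (gcomp (gcomp j (VnInc M apre 1)) (Pb.fstHom (secHom M apre) k))
      (M.res (X := mkG G (Pb (secHom M apre) k)) (Pb.sndHom (secHom M apre) k) w) =
    M.tr (gcomp (gcomp j h) (VnInc M bpre 1)) (M.res (secHom M bpre) (M.res f w))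
  rw [M.res_comp, e2, e3]
  exact (congrArg (M.tr (X := mkG G (Pb (secHom M apre) k))
      (gcomp (gcomp j (VnInc M apre 1)) (Pb.fstHom (secHom M apre) k)))
      (tr_res_iso M ιHom hιbij (M.res (X := mkG G (Pb (secHom M apre) k))
        (Pb.sndHom (secHom M apre) k) w)).symm).trans
    ((M.tr_comp _ _ _).trans (congrArg _ (M.res_comp _ _ _)))

theorem psi_sound (a b : PreT M Y) (hab : STRel M Y a b) : Psi M a = Psi M b := by
  cases hab with
  | iso h => exact psi_iso M _ _ h
  | distrib k i j f g h hD w => exact psi_distrib M k i j f g h hD w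

theorem phi_iso (a b : PreT M Y) (hiso : IsoRel M Y a b) : Phi M a = Phi M b := by
  obtain ⟨f, g, hf, hg, hig, hjg, hres⟩ := hiso
  have hcard : ∀ v₀ : (VnFS M a 0).carrier, Nat.card (fib b.i (g.symm v₀.1)) = 0 := by
    intro v₀
    rw [Nat.card_congr (isoFibEquiv a.i b.i f g hig (g.symm v₀.1)), g.apply_symm_apply]
    exact v₀.2
  have hcard' : ∀ w₀ : (VnFS M b 0).carrier, Nat.card (fib a.i (g w₀.1)) = 0 := by
    intro w₀
    rw [← Nat.card_congr (isoFibEquiv a.i b.i f g hig w₀.1)]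
    exact w₀.2
  let e : (VnFS M a 0).carrier ≃ (VnFS M b 0).carrier :=
    { toFun := fun v₀ => ⟨g.symm v₀.1, hcard v₀⟩
      invFun := fun w₀ => ⟨g w₀.1, hcard' w₀⟩
      left_inv := fun v₀ => Subtype.ext (g.apply_symm_apply v₀.1)
      right_inv := fun w₀ => Subtype.ext (g.symm_apply_apply w₀.1) }
  have heq : IsEquivariant G ⇑e :=
    fun γ v₀ => Subtype.ext (isEquivariant_symm g hg γ v₀.1)
  have hmap : ∀ v₀ : (VnFS M a 0).carrier,
      (gcomp b.j (VnInc M b 0)) (e v₀) = (gcomp a.j (VnInc M a 0)) v₀ := by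
    intro v₀
    show b.j (g.symm v₀.1) = a.j v₀.1
    rw [← hjg (g.symm v₀.1), g.apply_symm_apply]
  exact Quot.sound ⟨e, heq, hmap⟩

theorem phi_distrib {W U V A B : FinGSet G}
    (k : W.carrier →[G] U.carrier) (i : U.carrier →[G] V.carrier)
    (j : V.carrier →[G] Y.carrier) (f : A.carrier →[G] W.carrier)
    (g : A.carrier →[G] B.carrier) (h : B.carrier →[G] V.carrier)
    (hD : IsDistributor k i f g h) (w : M.obj W) :
    Phi M (⟨U, V, i, j, M.tr k w⟩ : PreT M Y) = Phi M ⟨A, B, g, gcomp j h, M.res f w⟩ := by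
  obtain ⟨α, β, hα, hβ, hαf, hβg, hβh⟩ := hD
  set apre : PreT M Y := ⟨U, V, i, j, M.tr k w⟩ with hapre
  set bpre : PreT M Y := ⟨A, B, g, gcomp j h, M.res f w⟩ with hbpre
  have hfibE : ∀ (v : V.carrier), Nat.card (fib i v) = 0 → IsEmpty (fib i v) := fun v hv =>
    haveI : Finite (fib i v) := Subtype.finite
    card_zero_isEmpty hv
  let σE : (VnFS M apre 0).carrier → Sec k i := fun v₀ =>
    { pt := v₀.1
      sec := fun u hu => ((hfibE v₀.1 v₀.2).false ⟨u, hu⟩).elim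
      isSec := fun u hu => ((hfibE v₀.1 v₀.2).false ⟨u, hu⟩).elim }
  have hcard : ∀ v₀ : (VnFS M apre 0).carrier,
      Nat.card (fib g (β.symm (σE v₀))) = 0 := by
    intro v₀
    have h3 : (β (β.symm (σE v₀))).pt = v₀.1 := by rw [Equiv.apply_symm_apply]
    rw [Nat.card_congr (distribFibEquiv k i g α β hβg (β.symm (σE v₀))), h3]
    exact v₀.2
  have hcard' : ∀ b₀ : (VnFS M bpre 0).carrier, Nat.card (fib i ((β b₀.1).pt)) = 0 := by
    intro b₀
    rw [← Nat.card_congr (distribFibEquiv k i g α β hβg b₀.1)]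
    exact b₀.2
  let e : (VnFS M apre 0).carrier ≃ (VnFS M bpre 0).carrier :=
    { toFun := fun v₀ => ⟨β.symm (σE v₀), hcard v₀⟩
      invFun := fun b₀ => ⟨(β b₀.1).pt, hcard' b₀⟩
      left_inv := fun v₀ => Subtype.ext (by
        show (β (β.symm (σE v₀))).pt = v₀.1
        rw [Equiv.apply_symm_apply])
      right_inv := fun b₀ => Subtype.ext (by
        have hσ : σE ⟨(β b₀.1).pt, hcard' b₀⟩ = β b₀.1 :=
          Sec.ext' rfl (fun u hu hu' =>
            ((hfibE _ (hcard' b₀)).false ⟨u, hu⟩).elim)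
        show β.symm (σE ⟨(β b₀.1).pt, hcard' b₀⟩) = b₀.1
        rw [hσ, Equiv.symm_apply_apply]) }
  have heq : IsEquivariant G ⇑e := by
    intro γ v₀
    refine Subtype.ext ?_
    show β.symm (σE (γ • v₀)) = γ • β.symm (σE v₀)
    apply β.injective
    rw [Equiv.apply_symm_apply, hβ γ (β.symm (σE v₀)), Equiv.apply_symm_apply]
    refine Sec.ext' rfl (fun u hu hu' => ((hfibE _ (γ • v₀).2).false ⟨u, hu⟩).elim)
  have hmap : ∀ v₀ : (VnFS M apre 0).carrier,
      (gcomp (gcomp j h) (VnInc M bpre 0)) (e v₀) = (gcomp j (VnInc M apre 0)) v₀ := by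
    intro v₀
    show j (h (β.symm (σE v₀))) = j v₀.1
    have h4 : h (β.symm (σE v₀)) = v₀.1 := by
      rw [← hβh (β.symm (σE v₀)), Equiv.apply_symm_apply]
    rw [h4]
  exact Quot.sound ⟨e, heq, hmap⟩

theorem phi_sound (a b : PreT M Y) (hab : STRel M Y a b) : Phi M a = Phi M b := by
  cases hab with
  | iso h => exact phi_iso M _ _ h
  | distrib k i j f g h hD w => exact phi_distrib M k i j f g h hD w

theorem phi_bPair (s : BurnPre G Y) :
    Phi M (bPair M s) = Quot.mk (@BurnIso G _ Y) s := by
  refine Quot.sound ?_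
  refine ⟨{ toFun := fun q => q.1
            invFun := fun v => ⟨v, bPair_deg0 M s v⟩
            left_inv := fun q => Subtype.ext rfl
            right_inv := fun v => rfl }, fun _ _ => rfl, fun _ => rfl⟩

end Invariance

section Reach

variable (M : SemiMackey G) {Y : FinGSet G}

theorem deg0_reaches (a : PreT M Y) (ha : DegN 0 a) :
    Quot.mk (STRel M Y) a = Quot.mk (STRel M Y) (bPair M ⟨a.V, a.j⟩) := by
  haveI hE := deg0_isEmpty M a ha
  refine Quot.sound (STRel.iso ?_)
  refine ⟨(Equiv.equivEmpty a.U.carrier).symm, Equiv.refl a.V.carrier,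
    fun γ ε => Empty.elim ε, fun _ _ => rfl, fun u' => Empty.elim u', fun v' => rfl, ?_⟩
  exact @Subsingleton.elim _ M.empty_subsingleton _ _

theorem theta_reaches (a : PreT M Y) (ha : DegN 1 a) :
    ∃ x : M.obj Y, Quot.mk (STRel M Y) (thetaPre M Y x) = Quot.mk (STRel M Y) a := by
  have hbij : Function.Bijective ⇑a.i := by
    constructor
    · intro u u' huu
      have hsub := (Nat.card_eq_one_iff_unique.mp (ha (a.i u'))).1
      exact congrArg Subtype.val (@Subsingleton.elim {w' : a.U.carrier // a.i w' = a.i u'}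
        hsub ⟨u, huu⟩ ⟨u', rfl⟩)
    · intro v
      obtain ⟨q⟩ := (Nat.card_eq_one_iff_unique.mp (ha v)).2
      exact ⟨q.1, q.2⟩
  refine ⟨M.tr a.j (M.res (invHom a.i hbij) a.u), ?_⟩
  have h1 : Quot.mk (STRel M Y)
        (thetaPre M Y (M.tr a.j (M.res (invHom a.i hbij) a.u))) =
      Quot.mk (STRel M Y) ⟨mkG G (ECan a.j (gid G Y.carrier)),
        mkG G (Sec a.j (gid G Y.carrier)), pi2Hom a.j (gid G Y.carrier),
        gcomp (gid G Y.carrier) (pHom a.j (gid G Y.carrier)),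
        M.res (evalHom a.j (gid G Y.carrier)) (M.res (invHom a.i hbij) a.u)⟩ :=
    Quot.sound (STRel.distrib (W := a.V) (U := Y) (V := Y)
      (A := mkG G (ECan a.j (gid G Y.carrier))) (B := mkG G (Sec a.j (gid G Y.carrier)))
      a.j (gid G Y.carrier) (gid G Y.carrier) (evalHom a.j (gid G Y.carrier))
      (pi2Hom a.j (gid G Y.carrier)) (pHom a.j (gid G Y.carrier))
      (isDistributor_canonical a.j (gid G Y.carrier)) (M.res (invHom a.i hbij) a.u))
  have h2 : Quot.mk (STRel M Y) (⟨mkG G (ECan a.j (gid G Y.carrier)),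
        mkG G (Sec a.j (gid G Y.carrier)), pi2Hom a.j (gid G Y.carrier),
        gcomp (gid G Y.carrier) (pHom a.j (gid G Y.carrier)),
        M.res (evalHom a.j (gid G Y.carrier)) (M.res (invHom a.i hbij) a.u)⟩ : PreT M Y) =
      Quot.mk (STRel M Y) ⟨a.V, a.V, gid G a.V.carrier, a.j,
        M.res (invHom a.i hbij) a.u⟩ := by
    have step : ∀ hf : IsEquivariant G ⇑(eCanEquiv a.j),
        M.res (X := a.V) (Y := mkG G (ECan a.j (gid G Y.carrier)))
          (MulActionHom.mk ⇑(eCanEquiv a.j) hf)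
          (M.res (X := mkG G (ECan a.j (gid G Y.carrier)))
            (evalHom a.j (gid G Y.carrier)) (M.res (invHom a.i hbij) a.u)) =
        M.res (invHom a.i hbij) a.u := by
      intro hf
      refine (M.res_comp _ _ _).trans ?_
      have hco : gcomp (evalHom a.j (gid G Y.carrier))
          (MulActionHom.mk ⇑(eCanEquiv a.j) hf) = gid G a.V.carrier :=
        maext (fun v => rfl)
      exact (congrArg (fun φ => M.res φ (M.res (invHom a.i hbij) a.u)) hco).trans (M.res_id _)
    refine Quot.sound (STRel.iso ?_)
    exact ⟨eCanEquiv a.j, eSecEquiv a.j, eCanEquiv_equivariant a.j,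
      eSecEquiv_equivariant a.j, fun u' => rfl, fun v' => rfl,
      step (eCanEquiv_equivariant a.j)⟩
  have h3 : Quot.mk (STRel M Y) a = Quot.mk (STRel M Y)
      ⟨a.V, a.V, gid G a.V.carrier, a.j, M.res (invHom a.i hbij) a.u⟩ := by
    refine Quot.sound (STRel.iso ?_)
    refine ⟨(Equiv.ofBijective ⇑a.i hbij).symm, Equiv.refl a.V.carrier,
      isEquivariant_symm (Equiv.ofBijective ⇑a.i hbij)
        (fun γ u => MulActionHom.map_smul a.i γ u),
      fun _ _ => rfl,
      fun u' => (Equiv.ofBijective ⇑a.i hbij).apply_symm_apply u',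
      fun v' => rfl, ?_⟩
    have hco : MulActionHom.mk ⇑((Equiv.ofBijective ⇑a.i hbij).symm)
        (isEquivariant_symm (Equiv.ofBijective ⇑a.i hbij)
          (fun γ u => MulActionHom.map_smul a.i γ u)) = invHom a.i hbij :=
      maext (fun d => rfl)
    rw [hco]
  rw [h1, h2, h3]

theorem trPre_compat {Z : FinGSet G} (f : Y.carrier →[G] Z.carrier) (s : BurnPre G Y) :
    Quot.mk (STRel M Z) (bPair M ⟨s.A, gcomp f s.f⟩) =
      Quot.mk (STRel M Z) (trPre M f (bPair M s)) := rfl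

theorem resPre_compat {Z : FinGSet G} (f : Z.carrier →[G] Y.carrier) (s : BurnPre G Y) :
    Quot.mk (STRel M Z) (bPair M ⟨mkG G (Pb s.f f), Pb.sndHom s.f f⟩) =
      Quot.mk (STRel M Z) (resPre M f (bPair M s)) := by
  haveI hE : IsEmpty (resPre M f (bPair M s)).U.carrier := ⟨fun q => Empty.elim q.1.1⟩
  refine Quot.sound (STRel.iso ?_)
  refine ⟨Equiv.equivEmpty _, Equiv.refl _, fun γ q => Empty.elim q.1.1, fun _ _ => rfl,
    fun u' => Empty.elim u'.1.1, fun v' => rfl, obj_eq_of_isEmpty M hE _ _⟩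

theorem burn_sound (s t : BurnPre G Y) (hst : BurnIso s t) :
    Quot.mk (STRel M Y) (bPair M s) = Quot.mk (STRel M Y) (bPair M t) := by
  obtain ⟨e, he, hmap⟩ := hst
  refine Quot.sound (STRel.iso ?_)
  refine ⟨Equiv.refl _, e.symm, fun _ _ => rfl, isEquivariant_symm e he,
    fun u' => Empty.elim u',
    fun v' => (hmap (e.symm v')).symm.trans
      (congrArg (fun z => t.f z) (e.apply_symm_apply v')), ?_⟩
  exact @Subsingleton.elim _ M.empty_subsingleton _ _

end Reach

/-- The unique map of semi-Tambara functors `sA → sT(M)` from the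
Burnside semi-Mackey functor induces an isomorphism of semi-Mackey functors
`sA ≅ sT⁰(M)` (explicitly, `[A → Y] ↦ [(∅ → A → Y, 0)]`), and the universal map
`θ_M : M → sT(M)` induces an isomorphism of semi-Mackey functors `M ≅ sT¹(M)`. -/
theorem statement6 [Finite G] (M : SemiMackey G) :
    -- `sA ≅ sT⁰(M)`
    (∀ (Y : FinGSet G) (s t : BurnPre G Y), BurnIso s t →
      Quot.mk (STRel M Y) (bPair M s) = Quot.mk (STRel M Y) (bPair M t)) ∧
    (∀ Y : FinGSet G, ∃ e0 : Quot (@BurnIso G _ Y) → sT M Y,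
      (∀ s : BurnPre G Y, e0 (Quot.mk _ s) = Quot.mk (STRel M Y) (bPair M s)) ∧
      Function.Injective e0 ∧
      Set.range e0 = {cl : sT M Y | ∃ a : PreT M Y, Quot.mk (STRel M Y) a = cl ∧ DegN 0 a}) ∧
    -- this identification commutes with transfers and restrictions
    (∀ {Y Z : FinGSet G} (f : Y.carrier →[G] Z.carrier) (s : BurnPre G Y),
      Quot.mk (STRel M Z) (bPair M ⟨s.A, gcomp f s.f⟩) =
        Quot.mk (STRel M Z) (trPre M f (bPair M s))) ∧
    (∀ {Y Z : FinGSet G} (f : Z.carrier →[G] Y.carrier) (s : BurnPre G Y),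
      Quot.mk (STRel M Z) (bPair M ⟨mkG G (Pb s.f f), Pb.sndHom s.f f⟩) =
        Quot.mk (STRel M Z) (resPre M f (bPair M s))) ∧
    -- `M ≅ sT¹(M)` via `θ_M`
    (∀ Y : FinGSet G,
      Function.Injective (fun x : M.obj Y => Quot.mk (STRel M Y) (thetaPre M Y x)) ∧
      Set.range (fun x : M.obj Y => Quot.mk (STRel M Y) (thetaPre M Y x)) =
        {cl : sT M Y | ∃ a : PreT M Y, Quot.mk (STRel M Y) a = cl ∧ DegN 1 a}) := by
  refine ⟨fun Y s t hst => burn_sound M s t hst, ?_, ?_, ?_, ?_⟩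
  · intro Y
    refine ⟨Quot.lift (fun s => Quot.mk (STRel M Y) (bPair M s))
      (fun s t hst => burn_sound M s t hst), fun s => rfl, ?_, ?_⟩
    · intro q1 q2 hq
      obtain ⟨s, rfl⟩ := q1.exists_rep
      obtain ⟨t, rfl⟩ := q2.exists_rep
      have h1 := congrArg (Quot.lift (Phi M) (fun a b hab => phi_sound M a b hab)) hq
      show Quot.mk (@BurnIso G _ Y) s = Quot.mk (@BurnIso G _ Y) t
      rw [← phi_bPair M s, ← phi_bPair M t]
      exact h1
    · ext cl
      constructor
      · rintro ⟨q, rfl⟩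
        obtain ⟨s, rfl⟩ := q.exists_rep
        exact ⟨bPair M s, rfl, bPair_deg0 M s⟩
      · rintro ⟨a, rfl, ha⟩
        exact ⟨Quot.mk _ (⟨a.V, a.j⟩ : BurnPre G Y), (deg0_reaches M a ha).symm⟩
  · intro Y Z f s
    exact trPre_compat M f s
  · intro Y Z f s
    exact resPre_compat M f s
  · intro Y
    constructor
    · intro x y hxy
      have h1 := congrArg (Quot.lift (Psi M) (fun a b hab => psi_sound M a b hab)) hxy
      calc x = Psi M (thetaPre M Y x) := (psi_theta M x).symm
        _ = Psi M (thetaPre M Y y) := h1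
        _ = y := psi_theta M y
    · ext cl
      constructor
      · rintro ⟨x, rfl⟩
        exact ⟨thetaPre M Y x, rfl, theta_deg1 M x⟩
      · rintro ⟨a, rfl, ha⟩
        obtain ⟨x, hx⟩ := theta_reaches M a ha
        exact ⟨x, hx⟩

end Tamb
end Tamb
end
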